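/- arXiv:1811.09770 — 4 statements merged into one kernel-verified Lean document; each statement's English description precedes it below -/
import Mathlib

section
/- Discrete Poincaré lemma: Take any 1 ≤ k ≤ n, an abelian group G, and a cube B in ℤⁿ. Then (i) the exterior derivative d maps the set of G-valued (k−1)-forms on B surjectively onto the set of closed G-valued k-forms on B; (ii) if G is finite and m is the number of closed G-valued (k−1)-forms on B, then every closed G-valued k-form on B has exactly m preimages under d; (iii) if 1 ≤ k ≤ n−1 and f is a closed G-valued k-form on B that vanishes on all k-cells on the boundary of B, then there is a G-valued (k−1)-form h on B that vanishes on all (k−1)-cells on the boundary of B and satisfies dh = f. -/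
/-!
Discrete exterior calculus on the cell complex of `ℤⁿ`.

A positively oriented `k`-cell `dx_{i₁} ∧ ⋯ ∧ dx_{i_k}` (with `i₁ < ⋯ < i_k`) at the point
`x ∈ ℤⁿ` is encoded as the pair `(x, S)` with `S = {i₁, …, i_k}`, so its dimension is `S.card`.
A `G`-valued `k`-form is a `G`-valued function on cells; only its values on cells of
dimension `k` are relevant (a single function type conveniently encodes forms of all
degrees; every statement below is made on cells of the appropriate dimension).

The dual lattice `*ℤⁿ` is identified with `ℤⁿ`: the dual vertex `y = z + (1/2, …, 1/2)`
(the center of the unit `n`-cell with base vertex `z`) is identified with the integer point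
`z`, and the edges of the dual lattice at `y` point in the *negative* coordinate directions;
the dual cell `dy_{j₁} ∧ ⋯ ∧ dy_{j_m}` at `y` is encoded as the pair `(z, {j₁, …, j_m})`.
-/

/-- A cell of `ℤⁿ` (or of the dual lattice `*ℤⁿ`): a base point and a set of spanning
directions. -/
abbrev GCell (n : ℕ) := (Fin n → ℤ) × Finset (Fin n)

/-- The unit vector `e_i`. -/
def unitV (n : ℕ) (i : Fin n) : Fin n → ℤ := fun m => if m = i then 1 else 0

section Forms

variable {n : ℕ} {G : Type*} [AddCommGroup G]

/-- The discrete exterior derivative on `ℤⁿ`: for a `k`-form `f`,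
`(df)_{i₁⋯i_{k+1}}(x) = ∑_j (−1)^{j−1} ∂_{i_j} f_{i₁⋯î_j⋯i_{k+1}}(x)`, where
`∂_i h(x) = h(x + e_i) − h(x)`. -/
def dF (f : GCell n → G) : GCell n → G := fun c =>
  ∑ i ∈ c.2.attach,
    ((-1 : ℤ) ^ (c.2.filter (fun j => j < i.1)).card) •
      (f (c.1 + unitV n i.1, c.2.erase i.1) - f (c.1, c.2.erase i.1))

/-- The exterior derivative on the dual lattice: the same formula as `dF` but with `∂_i`
replaced by `∂̄_i`, where `∂̄_i h(y) = h(y) − h(y − e_i)`. -/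
def dFDual (f : GCell n → G) : GCell n → G := fun c =>
  ∑ i ∈ c.2.attach,
    ((-1 : ℤ) ^ (c.2.filter (fun j => j < i.1)).card) •
      (f (c.1, c.2.erase i.1) - f (c.1 - unitV n i.1, c.2.erase i.1))

/-- The discrete coderivative on `ℤⁿ`: for a `k`-form `f`,
`δf(x) = ∑_{i₁<⋯<i_k} ∑_l (−1)^l ∂̄_{i_l} f_{i₁⋯i_k}(x) dx_{i₁} ∧ ⋯ ∧ dx̂_{i_l} ∧ ⋯ ∧ dx_{i_k}`,
where `∂̄_i h(x) = h(x) − h(x − e_i)`  (and `δf = 0` for `0`-forms). -/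
def codiff (f : GCell n → G) : GCell n → G := fun c =>
  ∑ i ∈ (c.2ᶜ).attach,
    ((-1 : ℤ) ^ ((c.2.filter (fun j => j < i.1)).card + 1)) •
      (f (c.1, insert i.1 c.2) - f (c.1 - unitV n i.1, insert i.1 c.2))

/-- The sign of the permutation `(i₁, …, i_k, j₁, …, j_{n−k})`, where `i₁ < ⋯ < i_k` lists
`S` and `j₁ < ⋯ < j_{n−k}` lists its complement. -/
def hodgeSign (S : Finset (Fin n)) : ℤ :=
  (-1) ^ (∑ i ∈ S, ((Sᶜ : Finset (Fin n)).filter (fun j => j < i)).card)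

/-- The Hodge dual of a `k`-form `f` on `ℤⁿ`: the `(n−k)`-form `*f` on the dual lattice
determined by `*f(*c) = f(c)`, i.e. `*f(z, T) = s · f(z, Tᶜ)` with `s` the sign of the
permutation `(Tᶜ, T)`. -/
def hodgeToDual (f : GCell n → G) : GCell n → G := fun c =>
  hodgeSign (c.2ᶜ) • f (c.1, c.2ᶜ)

/-- The Hodge dual of a form `g` on the dual lattice `*ℤⁿ`: the form `*g` on `ℤⁿ`
determined by `*g(*c') = g(c')`, i.e. `*g(x, S) = (−1)^{|S|·|Sᶜ|} s · g(x, Sᶜ)` with `s`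
the sign of the permutation `(S, Sᶜ)`. -/
def hodgeToPrimal (g : GCell n → G) : GCell n → G := fun c =>
  ((-1 : ℤ) ^ (c.2.card * (c.2ᶜ : Finset (Fin n)).card) * hodgeSign c.2) • g (c.1, c.2ᶜ)

end Forms

section Cube

variable {n : ℕ}

/-- Membership of a point in the cube `[a₁, a₁+w] × ⋯ × [a_n, a_n+w] ∩ ℤⁿ`. -/
def InCube (a : Fin n → ℤ) (w : ℕ) (v : Fin n → ℤ) : Prop :=
  ∀ m, a m ≤ v m ∧ v m ≤ a m + w

/-- `v` is a vertex of the cell `c` (that is, `v = x + ∑_{i ∈ T} e_i` for some `T ⊆ S`). -/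
def CellVert (c : GCell n) (v : Fin n → ℤ) : Prop :=
  ∃ T ⊆ c.2, v = fun m => c.1 m + (if m ∈ T then 1 else 0)

/-- The cell `c` is in the cube: all its vertices are in the cube. -/
def CellIn (a : Fin n → ℤ) (w : ℕ) (c : GCell n) : Prop :=
  ∀ m, a m ≤ c.1 m ∧ c.1 m + (if m ∈ c.2 then 1 else 0) ≤ a m + w

/-- A boundary vertex of the cube. -/
def BdryVtx (a : Fin n → ℤ) (w : ℕ) (v : Fin n → ℤ) : Prop :=
  InCube a w v ∧ ∃ m, v m = a m ∨ v m = a m + w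

/-- The cell `c` is on the boundary of the cube: all its vertices are boundary vertices. -/
def CellOnBdry (a : Fin n → ℤ) (w : ℕ) (c : GCell n) : Prop :=
  CellIn a w c ∧ ∀ v, CellVert c v → BdryVtx a w v

/-- The cell `c` is outside the cube: some vertex of `c` is outside the cube. -/
def CellOutside (a : Fin n → ℤ) (w : ℕ) (c : GCell n) : Prop :=
  ∃ v, CellVert c v ∧ ¬ InCube a w v

lemma cellIn_iff {a : Fin n → ℤ} {w : ℕ} {c : GCell n} :
    CellIn a w c ↔ ∀ v, CellVert c v → InCube a w v := by
  constructor
  · rintro h v ⟨T, hT, rfl⟩ m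
    obtain ⟨h1, h2⟩ := h m
    by_cases hm : m ∈ T
    · have hmS : m ∈ c.2 := hT hm
      simp only [hm, if_pos, hmS] at *
      omega
    · simp only [hm, if_neg, not_false_iff, add_zero]
      constructor
      · exact h1
      · split at h2 <;> omega
  · intro h m
    have h0 := h c.1 ⟨∅, Finset.empty_subset _, by funext m; simp⟩
    constructor
    · exact (h0 m).1
    · by_cases hm : m ∈ c.2
      · have := (h (fun m' => c.1 m' + (if m' ∈ ({m} : Finset (Fin n)) then 1 else 0))
          ⟨{m}, by simpa using hm, rfl⟩) m
        simpa [hm] using this.2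
      · have := h0 m
        simpa [hm] using this.2

lemma cellIn_erase {a : Fin n → ℤ} {w : ℕ} {c : GCell n} (h : CellIn a w c) (i : Fin n) :
    CellIn a w (c.1, c.2.erase i) := by
  intro m
  obtain ⟨h1, h2⟩ := h m
  refine ⟨h1, ?_⟩
  by_cases hm : m ∈ c.2.erase i
  · simpa [hm, Finset.mem_of_mem_erase hm] using h2
  · simp only [hm, if_neg, not_false_iff, add_zero]
    split at h2 <;> omega

lemma cellIn_shift_erase {a : Fin n → ℤ} {w : ℕ} {c : GCell n} (h : CellIn a w c)
    {i : Fin n} (hi : i ∈ c.2) :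
    CellIn a w (c.1 + unitV n i, c.2.erase i) := by
  intro m
  obtain ⟨h1, h2⟩ := h m
  simp only [Pi.add_apply, unitV]
  by_cases hmi : m = i
  · subst hmi
    have hmm : m ∉ c.2.erase m := by simp
    simp only [if_pos rfl, hmm, if_neg, not_false_iff, add_zero]
    simp only [hi, if_pos] at h2
    omega
  · simp only [hmi, if_neg, not_false_iff, add_zero]
    refine ⟨h1, ?_⟩
    by_cases hm : m ∈ c.2.erase i
    · simpa [hm, Finset.mem_of_mem_erase hm] using h2
    · simp only [hm, if_neg, not_false_iff, add_zero]
      split at h2 <;> omega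

variable {G : Type*} [AddCommGroup G]

/-- A `G`-valued form on the cube with corner `a` and width `w`: a function on the cells of
the cube (of all dimensions; only the values in one dimension are relevant at a time). -/
abbrev FormC (a : Fin n → ℤ) (w : ℕ) (G : Type*) := {c : GCell n // CellIn a w c} → G

/-- The exterior derivative of a form on a cube, given by the same formula as `dF`. -/
def dFC (a : Fin n → ℤ) (w : ℕ) (f : FormC a w G) : FormC a w G := fun c =>
  ∑ i ∈ c.1.2.attach,
    ((-1 : ℤ) ^ (c.1.2.filter (fun j => j < i.1)).card) •
      (f ⟨(c.1.1 + unitV n i.1, c.1.2.erase i.1), cellIn_shift_erase c.2 i.2⟩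
        - f ⟨(c.1.1, c.1.2.erase i.1), cellIn_erase c.2 i.1⟩)

end Cube

section DegreeForms

variable {n : ℕ} {G : Type*} [AddCommGroup G]

/-- A `G`-valued `k`-form on the cube with corner `a` and width `w`: a function on the
positively oriented `k`-cells in the cube. -/
abbrev FormB (a : Fin n → ℤ) (w : ℕ) (k : ℕ) (G : Type*) :=
  {c : GCell n // CellIn a w c ∧ c.2.card = k} → G

/-- The exterior derivative of a `k`-form on a cube, as a `(k+1)`-form on the cube. -/
def dB {a : Fin n → ℤ} {w : ℕ} {k : ℕ} (f : FormB a w k G) : FormB a w (k + 1) G := fun c =>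
  ∑ i ∈ c.1.2.attach,
    ((-1 : ℤ) ^ (c.1.2.filter (fun j => j < i.1)).card) •
      (f ⟨(c.1.1 + unitV n i.1, c.1.2.erase i.1),
          ⟨cellIn_shift_erase c.2.1 i.2, by simp [Finset.card_erase_of_mem i.2, c.2.2]⟩⟩
        - f ⟨(c.1.1, c.1.2.erase i.1),
          ⟨cellIn_erase c.2.1 i.1, by simp [Finset.card_erase_of_mem i.2, c.2.2]⟩⟩)

open scoped Classical in
/-- The extension of a `k`-form on a cube to a form on all of `ℤⁿ`, by zero outside. -/
noncomputable def extZ (a : Fin n → ℤ) (w : ℕ) (k : ℕ) (f : FormB a w k G) :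
    GCell n → G := fun c =>
  if h : CellIn a w c ∧ c.2.card = k then f ⟨c, h⟩ else 0

end DegreeForms

section DualCube

variable {n : ℕ}

/-!
In the integer coordinates for the dual lattice described above, the dual cube `*B` of the
cube `B` with corner `a` and width `w` (whose dual vertices are the centers of the unit
`n`-cells meeting `B`, i.e. `*B = [a−1/2, a+w+1/2]ⁿ ∩ *ℤⁿ`) has vertex set `[a−1, a+w]ⁿ`;
a dual cell `(z, T)` has vertices `z − ∑_{i∈T'} e_i` for `T' ⊆ T`.
-/

/-- Membership of a dual-lattice point (in integer coordinates) in the dual cube `*B`. -/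
def InDCube (a : Fin n → ℤ) (w : ℕ) (v : Fin n → ℤ) : Prop :=
  ∀ m, a m - 1 ≤ v m ∧ v m ≤ a m + w

/-- `v` is a vertex of the dual cell `c` (i.e. `v = z − ∑_{i ∈ T'} e_i` for some `T' ⊆ T`). -/
def DCellVert (c : GCell n) (v : Fin n → ℤ) : Prop :=
  ∃ T ⊆ c.2, v = fun m => c.1 m - (if m ∈ T then 1 else 0)

/-- The dual cell `c` is in the dual cube `*B`: all its vertices are in `*B`. -/
def DCellIn (a : Fin n → ℤ) (w : ℕ) (c : GCell n) : Prop :=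
  ∀ m, a m - 1 ≤ c.1 m - (if m ∈ c.2 then 1 else 0) ∧ c.1 m ≤ a m + w

/-- A boundary vertex of the dual cube `*B`. -/
def DBdryVtx (a : Fin n → ℤ) (w : ℕ) (v : Fin n → ℤ) : Prop :=
  InDCube a w v ∧ ∃ m, v m = a m - 1 ∨ v m = a m + w

/-- The dual cell `c` is on the boundary of `*B`: all its vertices are boundary vertices. -/
def DCellOnBdry (a : Fin n → ℤ) (w : ℕ) (c : GCell n) : Prop :=
  DCellIn a w c ∧ ∀ v, DCellVert c v → DBdryVtx a w v

/-- The dual cell `c` is outside `*B`: some vertex of `c` is outside `*B`. -/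
def DCellOutside (a : Fin n → ℤ) (w : ℕ) (c : GCell n) : Prop :=
  ∃ v, DCellVert c v ∧ ¬ InDCube a w v

/-- The Hodge dual of the cell `(x, S)`, as an unoriented cell of the dual lattice:
the `(n−k)`-cell `(x, Sᶜ)`. -/
def dualCell (c : GCell n) : GCell n := (c.1, (c.2ᶜ : Finset (Fin n)))

lemma dCellIn_erase {a : Fin n → ℤ} {w : ℕ} {c : GCell n} (h : DCellIn a w c) (i : Fin n) :
    DCellIn a w (c.1, c.2.erase i) := by
  intro m
  obtain ⟨h1, h2⟩ := h m
  refine ⟨?_, h2⟩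
  by_cases hm : m ∈ c.2.erase i
  · simpa [hm, Finset.mem_of_mem_erase hm] using h1
  · simp only [hm, if_neg, not_false_iff, sub_zero]
    split at h1 <;> omega

lemma dCellIn_shift_erase {a : Fin n → ℤ} {w : ℕ} {c : GCell n} (h : DCellIn a w c)
    {i : Fin n} (hi : i ∈ c.2) :
    DCellIn a w (c.1 - unitV n i, c.2.erase i) := by
  intro m
  obtain ⟨h1, h2⟩ := h m
  simp only [Pi.sub_apply, unitV]
  by_cases hmi : m = i
  · subst hmi
    have hmm : m ∉ c.2.erase m := by simp
    simp only [if_pos rfl, hmm, if_neg, not_false_iff, sub_zero]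
    simp only [hi, if_pos] at h1
    omega
  · simp only [hmi, if_neg, not_false_iff, sub_zero]
    refine ⟨?_, h2⟩
    by_cases hm : m ∈ c.2.erase i
    · simpa [hm, Finset.mem_of_mem_erase hm] using h1
    · simp only [hm, if_neg, not_false_iff, sub_zero]
      split at h1 <;> omega

variable {G : Type*} [AddCommGroup G]

/-- A `G`-valued `j`-form on the dual cube `*B`: a function on the `j`-cells of the dual
lattice lying in `*B`. -/
abbrev FormDB (a : Fin n → ℤ) (w : ℕ) (j : ℕ) (G : Type*) :=
  {c : GCell n // DCellIn a w c ∧ c.2.card = j} → G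

/-- The exterior derivative of a `j`-form on the dual cube `*B`, as a `(j+1)`-form on `*B`
(the same formula as `dF`, with `∂_i` replaced by `∂̄_i`). -/
def dDB {a : Fin n → ℤ} {w : ℕ} {j : ℕ} (g : FormDB a w j G) : FormDB a w (j + 1) G :=
  fun c =>
    ∑ i ∈ c.1.2.attach,
      ((-1 : ℤ) ^ (c.1.2.filter (fun j' => j' < i.1)).card) •
        (g ⟨(c.1.1, c.1.2.erase i.1),
            ⟨dCellIn_erase c.2.1 i.1, by simp [Finset.card_erase_of_mem i.2, c.2.2]⟩⟩
          - g ⟨(c.1.1 - unitV n i.1, c.1.2.erase i.1),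
            ⟨dCellIn_shift_erase c.2.1 i.2, by simp [Finset.card_erase_of_mem i.2, c.2.2]⟩⟩)

open scoped Classical in
/-- The Hodge dual `*f`, a `j`-form on the dual cube `*B`, of a `k`-form `f` on the cube
`B`: it is determined by `*f(*c) = f(c)` on the internal cells of `*B` (equivalently
`*f(z,T) = s·f(z,Tᶜ)` with `s` the sign of the permutation `(Tᶜ, T)`), and is zero on the
boundary cells of `*B`. -/
noncomputable def starB (a : Fin n → ℤ) (w : ℕ) (k : ℕ) {j : ℕ} (f : FormB a w k G) :
    FormDB a w j G := fun c =>
  if DCellOnBdry a w c.1 then 0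
  else hodgeSign ((c.1.2ᶜ : Finset (Fin n))) • extZ a w k f (c.1.1, (c.1.2ᶜ : Finset (Fin n)))

end DualCube

namespace DPL

open Finset

variable {n : ℕ} {G : Type*} [AddCommGroup G]

/-- The sign `(-1)^{#{j ∈ S : j < i}}`. -/
def sg (S : Finset (Fin n)) (i : Fin n) : ℤ := (-1) ^ (S.filter (fun j => j < i)).card

lemma dF_eq (φ : GCell n → G) (c : GCell n) :
    dF φ c = ∑ i ∈ c.2, sg c.2 i •
      (φ (c.1 + unitV n i, c.2.erase i) - φ (c.1, c.2.erase i)) := by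
  rw [dF, ← Finset.sum_attach c.2 (fun i => sg c.2 i •
      (φ (c.1 + unitV n i, c.2.erase i) - φ (c.1, c.2.erase i)))]
  rfl

lemma upd_add_unit (x : Fin n → ℤ) (m i : Fin n) (t : ℤ) (him : i ≠ m) :
    Function.update (x + unitV n i) m t = Function.update x m t + unitV n i := by
  funext j
  by_cases hj : j = m
  · subst hj
    simp [Function.update, unitV, him.symm]
  · simp [Function.update, hj, unitV]

lemma upd_add_unit_self (x : Fin n → ℤ) (m : Fin n) (t : ℤ) :
    Function.update (x + unitV n m) m t = Function.update x m t := by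
  funext j
  by_cases hj : j = m
  · subst hj; simp [Function.update]
  · simp [Function.update, hj, unitV]

lemma upd_unit_succ (x : Fin n → ℤ) (m : Fin n) (t : ℤ) :
    Function.update x m t + unitV n m = Function.update x m (t + 1) := by
  funext j
  by_cases hj : j = m
  · subst hj; simp [Function.update, unitV]
  · simp [Function.update, hj, unitV]

lemma add_unit_apply_ne (x : Fin n → ℤ) (m i : Fin n) (him : i ≠ m) :
    (x + unitV n i) m = x m := by
  simp [unitV, him.symm]

lemma card_filter_erase (S : Finset (Fin n)) {i : Fin n} (hi : i ∈ S) (j : Fin n) :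
    ((S.erase i).filter (fun x => x < j)).card + (if i < j then 1 else 0)
      = (S.filter (fun x => x < j)).card := by
  rw [Finset.filter_erase]
  by_cases h : i < j
  · have hif : i ∈ S.filter (fun x => x < j) := Finset.mem_filter.mpr ⟨hi, h⟩
    rw [if_pos h, Finset.card_erase_of_mem hif]
    have : 0 < (S.filter (fun x => x < j)).card := Finset.card_pos.2 ⟨i, hif⟩
    omega
  · have hif : i ∉ S.filter (fun x => x < j) := fun hmem => h (Finset.mem_filter.1 hmem).2
    rw [if_neg h, Finset.erase_eq_of_notMem hif, add_zero]

lemma card_filter_insert (S : Finset (Fin n)) {m : Fin n} (hm : m ∉ S) (i : Fin n) :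
    ((insert m S).filter (fun x => x < i)).card
      = (S.filter (fun x => x < i)).card + (if m < i then 1 else 0) := by
  rw [Finset.filter_insert]
  by_cases h : m < i
  · rw [if_pos h, if_pos h,
      Finset.card_insert_of_notMem (fun hmem => hm (Finset.mem_filter.1 hmem).1)]
  · rw [if_neg h, if_neg h, add_zero]

lemma sg_erase_self (S : Finset (Fin n)) (m : Fin n) : sg (S.erase m) m = sg S m := by
  unfold sg
  congr 2
  rw [Finset.filter_erase, Finset.erase_eq_of_notMem]
  intro hmem
  exact absurd (Finset.mem_filter.1 hmem).2 (lt_irrefl m)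

lemma sg_insert_self (S : Finset (Fin n)) (m : Fin n) : sg (insert m S) m = sg S m := by
  unfold sg
  congr 2
  rw [Finset.filter_insert, if_neg (lt_irrefl m)]

lemma sg_mul_self (S : Finset (Fin n)) (i : Fin n) : sg S i * sg S i = 1 := by
  unfold sg
  rw [← pow_add]
  exact Even.neg_one_pow ⟨_, rfl⟩

lemma negpow (p q : ℕ) (h : p = q + 1 ∨ q = p + 1) : (-1 : ℤ) ^ p = -(-1 : ℤ) ^ q := by
  rcases h with rfl | rfl
  · rw [pow_succ]; ring
  · rw [pow_succ]; ring

lemma sg_swap {S : Finset (Fin n)} {i m : Fin n} (hi : i ∈ S) (hm : m ∉ S) :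
    sg S m * sg (insert m S) i = -(sg S i * sg (S.erase i) m) := by
  have him : i ≠ m := fun h => hm (h ▸ hi)
  unfold sg
  rw [card_filter_insert S hm i, ← pow_add, ← pow_add]
  have h2 := card_filter_erase S hi m
  apply negpow
  rcases lt_or_gt_of_ne him with h | h
  · rw [if_pos h] at h2
    rw [if_neg (asymm h)]
    omega
  · rw [if_neg (asymm h)] at h2
    rw [if_pos h]
    omega

lemma sg_swap2 {S : Finset (Fin n)} {i j : Fin n} (hi : i ∈ S) (hj : j ∈ S) (hij : i ≠ j) :
    sg S i * sg (S.erase i) j = -(sg S j * sg (S.erase j) i) := by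
  unfold sg
  rw [← pow_add, ← pow_add]
  have h1 := card_filter_erase S hi j
  have h2 := card_filter_erase S hj i
  apply negpow
  rcases lt_or_gt_of_ne hij with h | h
  · rw [if_pos h] at h1
    rw [if_neg (asymm h)] at h2
    omega
  · rw [if_neg (asymm h)] at h1
    rw [if_pos h] at h2
    omega

lemma Ico_succ_insert (p q : ℤ) (h : p ≤ q) :
    Finset.Ico p (q + 1) = insert q (Finset.Ico p q) := by
  ext t
  simp only [Finset.mem_Ico, Finset.mem_insert]
  omega

lemma sum_Ico_succ (F : ℤ → G) (p q : ℤ) (h : p ≤ q) :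
    ∑ t ∈ Finset.Ico p (q + 1), F t = (∑ t ∈ Finset.Ico p q, F t) + F q := by
  rw [Ico_succ_insert p q h, Finset.sum_insert (by simp [Finset.mem_Ico])]
  abel

lemma tele' (g : ℤ → G) (p : ℤ) (d : ℕ) :
    ∑ t ∈ Finset.Ico p (p + d), (g (t + 1) - g t) = g (p + d) - g p := by
  induction d with
  | zero => simp
  | succ d ih =>
    have hd : (p + (d + 1 : ℕ) : ℤ) = (p + d) + 1 := by push_cast; ring
    rw [hd, sum_Ico_succ _ p _ (by omega : p ≤ p + (d : ℤ)), ih]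
    abel

lemma tele (g : ℤ → G) (p q : ℤ) (hq : p ≤ q) :
    ∑ t ∈ Finset.Ico p q, (g (t + 1) - g t) = g q - g p := by
  have : q = p + ((q - p).toNat : ℤ) := by omega
  rw [this]
  exact tele' g p _

lemma dF_add (φ ψ : GCell n → G) (c : GCell n) :
    dF (fun d => φ d + ψ d) c = dF φ c + dF ψ c := by
  simp only [dF_eq, ← Finset.sum_add_distrib]
  apply Finset.sum_congr rfl
  intro i _
  rw [← smul_add]
  congr 1
  abel

lemma dF_sub (φ ψ : GCell n → G) (c : GCell n) :
    dF (fun d => φ d - ψ d) c = dF φ c - dF ψ c := by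
  simp only [dF_eq, ← Finset.sum_sub_distrib]
  apply Finset.sum_congr rfl
  intro i _
  rw [← smul_sub]
  congr 1
  abel

end DPL
namespace DPL

open Finset

variable {n : ℕ} {G : Type*} [AddCommGroup G]

/-- The discrete homotopy operator: integration in direction `m` starting from `a m`. -/
noncomputable def Kr (a : Fin n → ℤ) (m : Fin n) (φ : GCell n → G) : GCell n → G := fun c =>
  if m ∈ c.2 then 0 else
    sg c.2 m • ∑ t ∈ Finset.Ico (a m) (c.1 m), φ (Function.update c.1 m t, insert m c.2)

/-- Restriction to the bottom face in direction `m`. -/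
def Pr (a : Fin n → ℤ) (m : Fin n) (φ : GCell n → G) : GCell n → G := fun c =>
  if m ∈ c.2 then 0 else φ (Function.update c.1 m (a m), c.2)

/-- Weighted extension of a form on the bottom face in direction `m`. -/
def Er (θ : ℤ → ℤ) (a : Fin n → ℤ) (m : Fin n) (u : GCell n → G) : GCell n → G := fun c =>
  if m ∈ c.2 then 0 else θ (c.1 m) • u (Function.update c.1 m (a m), c.2)

/-- The key homotopy identity `d K + K d = 1 - π`. -/
lemma L1 (a : Fin n → ℤ) (m : Fin n) (φ : GCell n → G) (x : Fin n → ℤ) (S : Finset (Fin n))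
    (hax : a m ≤ x m) :
    dF (Kr a m φ) (x, S) + Kr a m (dF φ) (x, S) = φ (x, S) - Pr a m φ (x, S) := by
  by_cases hm : m ∈ S
  · have hPr : Pr a m φ (x, S) = 0 := if_pos hm
    have hKd : Kr a m (dF φ) (x, S) = 0 := if_pos hm
    rw [hPr, hKd, add_zero, sub_zero, dF_eq]
    rw [Finset.sum_eq_single_of_mem m hm (fun i hi hne => by
      have hmi : m ∈ S.erase i := Finset.mem_erase.2 ⟨fun h => hne h.symm, hm⟩
      have z1 : Kr a m φ (x + unitV n i, S.erase i) = 0 := if_pos hmi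
      have z2 : Kr a m φ (x, S.erase i) = 0 := if_pos hmi
      rw [z1, z2, sub_zero, smul_zero])]
    have hnm : m ∉ S.erase m := Finset.notMem_erase m S
    have e1 : Kr a m φ (x + unitV n m, S.erase m)
        = sg (S.erase m) m • ∑ t ∈ Finset.Ico (a m) (x m + 1),
            φ (Function.update x m t, S) := by
      simp only [Kr]
      rw [if_neg hnm]
      have hxm : (x + unitV n m) m = x m + 1 := by simp [unitV]
      rw [hxm, Finset.insert_erase hm]
      congr 1
      refine Finset.sum_congr rfl fun t ht => ?_
      rw [upd_add_unit_self]
    have e2 : Kr a m φ (x, S.erase m)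
        = sg (S.erase m) m • ∑ t ∈ Finset.Ico (a m) (x m),
            φ (Function.update x m t, S) := by
      simp only [Kr]
      rw [if_neg hnm, Finset.insert_erase hm]
    rw [e1, e2, ← smul_sub, smul_smul, sg_erase_self, sg_mul_self, one_smul,
      sum_Ico_succ _ _ _ hax, add_sub_cancel_left, Function.update_eq_self]
  · have him : ∀ i ∈ S, i ≠ m := fun i hi h => hm (h ▸ hi)
    have hA : dF (Kr a m φ) (x, S)
        = ∑ i ∈ S, (sg S i * sg (S.erase i) m) •
            ∑ t ∈ Finset.Ico (a m) (x m),
              (φ (Function.update x m t + unitV n i, insert m (S.erase i))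
                - φ (Function.update x m t, insert m (S.erase i))) := by
      rw [dF_eq]
      refine Finset.sum_congr rfl fun i hi => ?_
      have hne : i ≠ m := him i hi
      have hni : m ∉ S.erase i := fun h => hm (Finset.mem_of_mem_erase h)
      have e1 : Kr a m φ (x + unitV n i, S.erase i)
          = sg (S.erase i) m • ∑ t ∈ Finset.Ico (a m) (x m),
              φ (Function.update x m t + unitV n i, insert m (S.erase i)) := by
        simp only [Kr]
        rw [if_neg hni, add_unit_apply_ne x m i hne]
        congr 1
        refine Finset.sum_congr rfl fun t ht => ?_
        rw [upd_add_unit x m i t hne]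
      have e2 : Kr a m φ (x, S.erase i)
          = sg (S.erase i) m • ∑ t ∈ Finset.Ico (a m) (x m),
              φ (Function.update x m t, insert m (S.erase i)) := by
        simp only [Kr]
        rw [if_neg hni]
      rw [e1, e2, ← smul_sub, smul_smul, ← Finset.sum_sub_distrib]
    have hB : Kr a m (dF φ) (x, S)
        = (φ (x, S) - Pr a m φ (x, S))
          + -∑ i ∈ S, (sg S i * sg (S.erase i) m) •
              ∑ t ∈ Finset.Ico (a m) (x m),
                (φ (Function.update x m t + unitV n i, insert m (S.erase i))
                  - φ (Function.update x m t, insert m (S.erase i))) := by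
      have e0 : Kr a m (dF φ) (x, S)
          = sg S m • ∑ t ∈ Finset.Ico (a m) (x m),
              dF φ (Function.update x m t, insert m S) := by
        simp only [Kr]
        rw [if_neg hm]
      have e1 : ∀ t ∈ Finset.Ico (a m) (x m), dF φ (Function.update x m t, insert m S)
          = sg S m • (φ (Function.update x m (t + 1), S) - φ (Function.update x m t, S))
            + ∑ i ∈ S, sg (insert m S) i •
                (φ (Function.update x m t + unitV n i, insert m (S.erase i))
                  - φ (Function.update x m t, insert m (S.erase i))) := by
        intro t ht
        rw [dF_eq]
        rw [Finset.sum_insert hm]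
        congr 1
        · rw [Finset.erase_insert hm, sg_insert_self, upd_unit_succ]
        · refine Finset.sum_congr rfl fun i hi => ?_
          rw [Finset.erase_insert_of_ne (Ne.symm (him i hi))]
      rw [e0, Finset.sum_congr rfl e1, Finset.sum_add_distrib, smul_add]
      congr 1
      · rw [Finset.smul_sum]
        have h1 : ∀ t ∈ Finset.Ico (a m) (x m),
            sg S m • sg S m •
              (φ (Function.update x m (t + 1), S) - φ (Function.update x m t, S))
            = (fun s => φ (Function.update x m s, S)) (t + 1)
              - (fun s => φ (Function.update x m s, S)) t := by
          intro t ht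
          rw [smul_smul, sg_mul_self, one_smul]
        rw [Finset.sum_congr rfl h1,
          tele (fun s => φ (Function.update x m s, S)) (a m) (x m) hax]
        simp only [Function.update_eq_self]
        have hPr : Pr a m φ (x, S) = φ (Function.update x m (a m), S) := by
          simp only [Pr]; rw [if_neg hm]
        rw [hPr]
      · rw [Finset.smul_sum]
        have h1 : ∀ t ∈ Finset.Ico (a m) (x m),
            sg S m • ∑ i ∈ S, sg (insert m S) i •
                (φ (Function.update x m t + unitV n i, insert m (S.erase i))
                  - φ (Function.update x m t, insert m (S.erase i)))
            = ∑ i ∈ S, -((sg S i * sg (S.erase i) m) •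
                (φ (Function.update x m t + unitV n i, insert m (S.erase i))
                  - φ (Function.update x m t, insert m (S.erase i)))) := by
          intro t ht
          rw [Finset.smul_sum]
          refine Finset.sum_congr rfl fun i hi => ?_
          rw [smul_smul, sg_swap hi hm, neg_smul]
        rw [Finset.sum_congr rfl h1, Finset.sum_comm, ← Finset.sum_neg_distrib]
        refine Finset.sum_congr rfl fun i hi => ?_
        rw [Finset.sum_neg_distrib, ← Finset.smul_sum]
    rw [hA, hB]
    abel

/-- `d ∘ d = 0`. -/
lemma dF_dF (φ : GCell n → G) (c : GCell n) : dF (dF φ) c = 0 := by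
  obtain ⟨x, S⟩ := c
  rw [dF_eq]
  have key : ∀ i ∈ S, sg S i • (dF φ (x + unitV n i, S.erase i) - dF φ (x, S.erase i))
      = ∑ j ∈ S.erase i, (sg S i * sg (S.erase i) j) •
          ((φ (x + unitV n i + unitV n j, (S.erase i).erase j)
              + φ (x, (S.erase i).erase j))
            - (φ (x + unitV n i, (S.erase i).erase j)
              + φ (x + unitV n j, (S.erase i).erase j))) := by
    intro i hi
    rw [dF_eq, dF_eq, ← Finset.sum_sub_distrib, Finset.smul_sum]
    refine Finset.sum_congr rfl fun j hj => ?_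
    rw [← smul_sub, smul_smul]
    congr 1
    abel
  rw [Finset.sum_congr rfl key, Finset.sum_sigma']
  refine Finset.sum_involution (fun p _ => ⟨p.2, p.1⟩) ?h1 ?h2 ?h3 ?h4
  · rintro ⟨i, j⟩ hp
    simp only [Finset.mem_sigma, Finset.mem_erase] at hp
    obtain ⟨hi, hji, hj⟩ := hp
    have e : (φ (x + unitV n i + unitV n j, (S.erase i).erase j)
            + φ (x, (S.erase i).erase j))
          - (φ (x + unitV n i, (S.erase i).erase j)
            + φ (x + unitV n j, (S.erase i).erase j))
        = (φ (x + unitV n j + unitV n i, (S.erase j).erase i)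
            + φ (x, (S.erase j).erase i))
          - (φ (x + unitV n j, (S.erase j).erase i)
            + φ (x + unitV n i, (S.erase j).erase i)) := by
      rw [Finset.erase_right_comm, add_right_comm]
      abel
    show (sg S i * sg (S.erase i) j) • _ + (sg S j * sg (S.erase j) i) • _ = 0
    rw [sg_swap2 hi hj (fun h => hji h.symm), neg_smul, e, neg_add_cancel]
  · rintro ⟨i, j⟩ hp _
    simp only [Finset.mem_sigma, Finset.mem_erase] at hp
    intro h
    exact hp.2.1 (congrArg Sigma.fst h)
  · rintro ⟨i, j⟩ hp
    simp only [Finset.mem_sigma, Finset.mem_erase] at hp ⊢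
    exact ⟨hp.2.2, fun h => hp.2.1 h.symm, hp.1⟩
  · rintro ⟨i, j⟩ hp
    rfl

/-- Derivative of the weighted extension. -/
lemma dF_Er (θ : ℤ → ℤ) (a : Fin n → ℤ) (m : Fin n) (u : GCell n → G)
    (x : Fin n → ℤ) (S : Finset (Fin n)) :
    dF (Er θ a m u) (x, S)
      = if hm : m ∈ S then
          (sg S m * (θ (x m + 1) - θ (x m))) • u (Function.update x m (a m), S.erase m)
        else θ (x m) • dF u (Function.update x m (a m), S) := by
  by_cases hm : m ∈ S
  · rw [dif_pos hm, dF_eq]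
    rw [Finset.sum_eq_single_of_mem m hm (fun i hi hne => by
      have hmi : m ∈ S.erase i := Finset.mem_erase.2 ⟨fun h => hne h.symm, hm⟩
      have z1 : Er θ a m u (x + unitV n i, S.erase i) = 0 := if_pos hmi
      have z2 : Er θ a m u (x, S.erase i) = 0 := if_pos hmi
      rw [z1, z2, sub_zero, smul_zero])]
    have hnm : m ∉ S.erase m := Finset.notMem_erase m S
    have e1 : Er θ a m u (x + unitV n m, S.erase m)
        = θ (x m + 1) • u (Function.update x m (a m), S.erase m) := by
      simp only [Er]
      rw [if_neg hnm, upd_add_unit_self]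
      have hxm : (x + unitV n m) m = x m + 1 := by simp [unitV]
      rw [hxm]
    have e2 : Er θ a m u (x, S.erase m)
        = θ (x m) • u (Function.update x m (a m), S.erase m) := by
      simp only [Er]
      rw [if_neg hnm]
    rw [e1, e2, ← sub_smul, smul_smul]
  · rw [dif_neg hm, dF_eq, dF_eq, Finset.smul_sum]
    refine Finset.sum_congr rfl fun i hi => ?_
    have hne : i ≠ m := fun h => hm (h ▸ hi)
    have hni : m ∉ S.erase i := fun h => hm (Finset.mem_of_mem_erase h)
    have e1 : Er θ a m u (x + unitV n i, S.erase i)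
        = θ (x m) • u (Function.update x m (a m) + unitV n i, S.erase i) := by
      simp only [Er]
      rw [if_neg hni, add_unit_apply_ne x m i hne, upd_add_unit x m i (a m) hne]
    have e2 : Er θ a m u (x, S.erase i)
        = θ (x m) • u (Function.update x m (a m), S.erase i) := by
      simp only [Er]
      rw [if_neg hni]
    rw [e1, e2, ← smul_sub, smul_smul, smul_smul, mul_comm]

end DPL
namespace DPL

open Finset

variable {n : ℕ} {G : Type*} [AddCommGroup G]

/-- `c` is a cell of the sub-cube spanned by directions in `M` (based at the corner `a`). -/
def MCell (a : Fin n → ℤ) (M : Finset (Fin n)) (c : GCell n) : Prop :=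
  c.2 ⊆ M ∧ ∀ j, j ∉ M → c.1 j = a j

/-- `c` is on the `M`-relative boundary. -/
def MBdry (a : Fin n → ℤ) (w : ℕ) (M : Finset (Fin n)) (c : GCell n) : Prop :=
  ∃ j, j ∈ M ∧ j ∉ c.2 ∧ (c.1 j = a j ∨ c.1 j = a j + w)

lemma cellIn_update {a : Fin n → ℤ} {w : ℕ} {x : Fin n → ℤ} {S : Finset (Fin n)}
    (hin : CellIn a w (x, S)) {m : Fin n} (hm : m ∉ S) {t : ℤ}
    (h1 : a m ≤ t) (h2 : t ≤ a m + w) : CellIn a w (Function.update x m t, S) := by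
  intro j
  have hj := hin j
  dsimp only at hj ⊢
  by_cases hjm : j = m
  · subst hjm
    simp only [Function.update_self, if_neg hm, add_zero] at *
    exact ⟨h1, h2⟩
  · rw [Function.update_of_ne hjm]
    exact hj

lemma cellIn_insert {a : Fin n → ℤ} {w : ℕ} {x : Fin n → ℤ} {S : Finset (Fin n)}
    (hin : CellIn a w (x, S)) {m : Fin n} (hm : m ∉ S) {t : ℤ}
    (h1 : a m ≤ t) (h2 : t + 1 ≤ a m + w) :
    CellIn a w (Function.update x m t, insert m S) := by
  intro j
  have hj := hin j
  dsimp only at hj ⊢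
  by_cases hjm : j = m
  · subst hjm
    simp only [Function.update_self, if_pos (Finset.mem_insert_self j S)]
    exact ⟨h1, h2⟩
  · rw [Function.update_of_ne hjm]
    have hmem : j ∈ insert m S ↔ j ∈ S := by simp [hjm]
    by_cases hjS : j ∈ S
    · rw [if_pos (hmem.mpr hjS)]
      rw [if_pos hjS] at hj
      exact hj
    · rw [if_neg (fun h => hjS (hmem.mp h))]
      rw [if_neg hjS] at hj
      exact hj

lemma cellIn_of_insert {a : Fin n → ℤ} {w : ℕ} {x : Fin n → ℤ} {S : Finset (Fin n)}
    {m : Fin n} (hm : m ∉ S) {t : ℤ}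
    (hin : CellIn a w (Function.update x m t, insert m S)) (hx : x m = a m) :
    CellIn a w (x, S) := by
  intro j
  have hj := hin j
  dsimp only at hj ⊢
  by_cases hjm : j = m
  · subst hjm
    rw [if_neg hm, hx]
    constructor
    · omega
    · have : (0 : ℤ) ≤ (w : ℤ) := Int.ofNat_nonneg w
      omega
  · rw [Function.update_of_ne hjm] at hj
    have hmem : j ∈ insert m S ↔ j ∈ S := by simp [hjm]
    by_cases hjS : j ∈ S
    · rw [if_pos hjS]
      rw [if_pos (hmem.mpr hjS)] at hj
      exact hj
    · rw [if_neg hjS]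
      rw [if_neg (fun h => hjS (hmem.mp h))] at hj
      exact hj

lemma cellOnBdry_of_extreme {a : Fin n → ℤ} {w : ℕ} {c : GCell n} (hin : CellIn a w c)
    {j : Fin n} (hj : j ∉ c.2) (hex : c.1 j = a j ∨ c.1 j = a j + w) :
    CellOnBdry a w c := by
  refine ⟨hin, fun v hv => ⟨(cellIn_iff.1 hin) v hv, j, ?_⟩⟩
  obtain ⟨T, hT, rfl⟩ := hv
  have hjT : j ∉ T := fun h => hj (hT h)
  simpa [hjT] using hex

lemma extreme_of_cellOnBdry {a : Fin n → ℤ} {w : ℕ} (hw : 2 ≤ w) {c : GCell n}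
    (h : CellOnBdry a w c) :
    ∃ j, j ∉ c.2 ∧ (c.1 j = a j ∨ c.1 j = a j + w) := by
  classical
  obtain ⟨hin, hbd⟩ := h
  set T := c.2.filter (fun j => c.1 j = a j) with hT
  obtain ⟨hvin, m, hm⟩ := hbd (fun m => c.1 m + (if m ∈ T then 1 else 0))
    ⟨T, Finset.filter_subset _ _, rfl⟩
  dsimp only at hm
  have hinm := hin m
  refine ⟨m, ?_, ?_⟩
  · intro hmc
    by_cases hma : c.1 m = a m
    · have hmT : m ∈ T := Finset.mem_filter.2 ⟨hmc, hma⟩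
      rw [if_pos hmT] at hm
      rw [if_pos hmc] at hinm
      omega
    · have hmT : m ∉ T := fun hh => hma (Finset.mem_filter.1 hh).2
      rw [if_neg hmT] at hm
      rw [if_pos hmc] at hinm
      omega
  · have hmT : m ∉ T := by
      intro hh
      have hmc := (Finset.mem_filter.1 hh).1
      have hma := (Finset.mem_filter.1 hh).2
      rw [if_pos hh] at hm
      rw [if_pos hmc] at hinm
      omega
    rw [if_neg hmT] at hm
    omega

lemma cellOnBdry_of_w1 {a : Fin n → ℤ} (hn : 1 ≤ n) {c : GCell n}
    (hin : CellIn a 1 c) : CellOnBdry a 1 c := by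
  refine ⟨hin, fun v hv => ⟨(cellIn_iff.1 hin) v hv, ⟨0, hn⟩, ?_⟩⟩
  have h := (cellIn_iff.1 hin) v hv ⟨0, hn⟩
  obtain ⟨h1, h2⟩ := h
  omega

lemma extZ_eq {a : Fin n → ℤ} {w k : ℕ} (f : FormB a w k G) (c : GCell n)
    (h1 : CellIn a w c) (h2 : c.2.card = k) :
    extZ a w k f c = f ⟨c, h1, h2⟩ := dif_pos ⟨h1, h2⟩

lemma extZ_eq_zero {a : Fin n → ℤ} {w k : ℕ} (f : FormB a w k G) (c : GCell n)
    (h : ¬(CellIn a w c ∧ c.2.card = k)) :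
    extZ a w k f c = 0 := dif_neg h

lemma dB_eq_dF {a : Fin n → ℤ} {w k : ℕ} (f : FormB a w k G)
    (c : {c : GCell n // CellIn a w c ∧ c.2.card = k + 1}) :
    dB f c = dF (extZ a w k f) c.1 := by
  simp only [dB, dF]
  refine Finset.sum_congr rfl fun i _ => ?_
  rw [extZ_eq f _ (cellIn_shift_erase c.2.1 i.2)
      (by simp [Finset.card_erase_of_mem i.2, c.2.2]),
    extZ_eq f _ (cellIn_erase c.2.1 i.1)
      (by simp [Finset.card_erase_of_mem i.2, c.2.2])]

lemma dB_restrict {a : Fin n → ℤ} {w k : ℕ} (ψ : GCell n → G)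
    (c : {c : GCell n // CellIn a w c ∧ c.2.card = k + 1}) :
    dB (a := a) (w := w) (k := k) (G := G) (fun d => ψ d.1) c = dF ψ c.1 := rfl

lemma dB_sub {a : Fin n → ℤ} {w k : ℕ} (f g : FormB a w k G)
    (c : {c : GCell n // CellIn a w c ∧ c.2.card = k + 1}) :
    dB (f - g) c = dB f c - dB g c := by
  simp only [dB, Pi.sub_apply, ← Finset.sum_sub_distrib]
  refine Finset.sum_congr rfl fun i _ => ?_
  rw [← smul_sub]
  congr 1
  abel

lemma dB_add {a : Fin n → ℤ} {w k : ℕ} (f g : FormB a w k G)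
    (c : {c : GCell n // CellIn a w c ∧ c.2.card = k + 1}) :
    dB (f + g) c = dB f c + dB g c := by
  simp only [dB, Pi.add_apply, ← Finset.sum_add_distrib]
  refine Finset.sum_congr rfl fun i _ => ?_
  rw [← smul_add]
  congr 1
  abel

lemma dB_zero {a : Fin n → ℤ} {w k : ℕ} :
    dB (0 : FormB a w k G) = 0 := by
  funext c
  simp [dB]

end DPL
namespace DPL

open Finset

variable {n : ℕ} {G : Type*} [AddCommGroup G]

/-- Full fiber sum in direction `m`, placed on the bottom face. -/
noncomputable def Fr (a : Fin n → ℤ) (w : ℕ) (m : Fin n) (φ : GCell n → G) : GCell n → G := fun c =>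
  if m ∈ c.2 ∨ c.1 m ≠ a m then 0 else
    sg c.2 m • ∑ t ∈ Finset.Ico (a m) (a m + w), φ (Function.update c.1 m t, insert m c.2)

lemma Fr_eq_Kr (a : Fin n → ℤ) (w : ℕ) (m : Fin n) (φ : GCell n → G)
    (x : Fin n → ℤ) (S : Finset (Fin n)) (hmS : m ∉ S) (hx : x m = a m) :
    Fr a w m φ (x, S) = Kr a m φ (Function.update x m (a m + w), S) := by
  simp only [Fr, Kr]
  rw [if_neg (by simp [hmS, hx]), if_neg hmS, Function.update_self]
  congr 1
  refine Finset.sum_congr rfl fun t ht => ?_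
  rw [Function.update_idem]

section FrLemmas

variable (a : Fin n → ℤ) (w : ℕ) {M : Finset (Fin n)} {m : Fin n}
  (D : ℕ) (φ : GCell n → G)

lemma FrS
    (hsupp : ∀ c, ¬(CellIn a w c ∧ c.2.card = D + 1 ∧ MCell a M c) → φ c = 0) :
    ∀ c, ¬(CellIn a w c ∧ c.2.card = D ∧ MCell a (M.erase m) c) →
      Fr a w m φ c = 0 := by
  rintro ⟨x, S⟩ hc
  by_cases hg : m ∈ S ∨ x m ≠ a m
  · exact if_pos hg
  · push_neg at hg
    obtain ⟨hmS, hxm⟩ := hg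
    show (if _ then _ else _) = _
    rw [if_neg (by simp [hmS, hxm]), Finset.sum_eq_zero, smul_zero]
    intro t ht
    apply hsupp
    rintro ⟨h1, h2, h3⟩
    dsimp only at h1 h2 h3
    refine hc ⟨cellIn_of_insert hmS h1 hxm, ?_, ?_, ?_⟩
    · dsimp only
      rw [Finset.card_insert_of_notMem hmS] at h2
      omega
    · exact Finset.subset_erase.2
        ⟨(Finset.subset_insert m S).trans h3.1, hmS⟩
    · intro j hj
      by_cases hjm : j = m
      · subst hjm; exact hxm
      · have hjM : j ∉ M := fun hM => hj (Finset.mem_erase.2 ⟨hjm, hM⟩)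
        have h := h3.2 j hjM
        dsimp only at h ⊢
        rw [Function.update_of_ne hjm] at h
        exact h

lemma FrB
    (hbdry : ∀ c, MBdry a w M c → φ c = 0) :
    ∀ c, MBdry a w (M.erase m) c → Fr a w m φ c = 0 := by
  rintro ⟨x, S⟩ ⟨j, hjM, hjS, hex⟩
  by_cases hg : m ∈ S ∨ x m ≠ a m
  · exact if_pos hg
  · push_neg at hg
    obtain ⟨hmS, hxm⟩ := hg
    show (if _ then _ else _) = _
    rw [if_neg (by simp [hmS, hxm]), Finset.sum_eq_zero, smul_zero]
    intro t ht
    have hjm : j ≠ m := (Finset.mem_erase.1 hjM).1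
    apply hbdry
    refine ⟨j, (Finset.mem_erase.1 hjM).2, ?_, ?_⟩
    · intro h
      rcases Finset.mem_insert.1 (by simpa using h) with h | h
      · exact hjm h
      · exact hjS h
    · dsimp only at hex ⊢
      rw [Function.update_of_ne hjm]
      exact hex

lemma FrC (hmM : m ∈ M)
    (hclosed : ∀ c, CellIn a w c → c.2.card = D + 2 → MCell a M c → dF φ c = 0)
    (hbdry : ∀ c, MBdry a w M c → φ c = 0) :
    ∀ c, CellIn a w c → c.2.card = D + 1 → MCell a (M.erase m) c →
      dF (Fr a w m φ) c = 0 := by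
  rintro ⟨y, S⟩ hin hcard hMc
  dsimp only at hcard
  have hxm : y m = a m := hMc.2 m (Finset.notMem_erase m M)
  have hmS : m ∉ S := fun h => (Finset.notMem_erase m M) (hMc.1 h)
  have hSM : S ⊆ M := hMc.1.trans (Finset.erase_subset m M)
  have hoff : ∀ j, j ∉ M → y j = a j := fun j hj =>
    hMc.2 j (fun hM => hj (Finset.mem_of_mem_erase hM))
  -- step 1: transfer to the top face
  have e : dF (Fr a w m φ) (y, S)
      = dF (Kr a m φ) (Function.update y m (a m + w), S) := by
    rw [dF_eq, dF_eq]
    refine Finset.sum_congr rfl fun i hi => ?_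
    have him : i ≠ m := fun h => hmS (h ▸ hi)
    have hmSi : m ∉ S.erase i := fun h => hmS (Finset.mem_of_mem_erase h)
    have hA : Fr a w m φ (y + unitV n i, S.erase i)
        = Kr a m φ (Function.update y m (a m + w) + unitV n i, S.erase i) := by
      rw [Fr_eq_Kr a w m φ _ _ hmSi (by rw [add_unit_apply_ne y m i him]; exact hxm),
        upd_add_unit y m i (a m + w) him]
    have hB : Fr a w m φ (y, S.erase i)
        = Kr a m φ (Function.update y m (a m + w), S.erase i) :=
      Fr_eq_Kr a w m φ _ _ hmSi hxm
    rw [hA, hB]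
  rw [e]
  have hL := L1 a m φ (Function.update y m (a m + w)) S
    (by rw [Function.update_self]; omega)
  have h1 : φ (Function.update y m (a m + w), S) = 0 :=
    hbdry _ ⟨m, hmM, hmS, Or.inr (Function.update_self m (a m + w) y)⟩
  have h2 : Pr a m φ (Function.update y m (a m + w), S) = 0 := by
    simp only [Pr]
    rw [if_neg hmS, Function.update_idem]
    exact hbdry _ ⟨m, hmM, hmS, Or.inl (Function.update_self m (a m) y)⟩
  have h3 : Kr a m (dF φ) (Function.update y m (a m + w), S) = 0 := by
    simp only [Kr]
    rw [if_neg hmS, Function.update_self, Finset.sum_eq_zero, smul_zero]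
    intro t ht
    have htt := Finset.mem_Ico.1 ht
    rw [Function.update_idem]
    apply hclosed
    · exact cellIn_insert hin hmS htt.1 (by omega)
    · rw [Finset.card_insert_of_notMem hmS]
      omega
    · constructor
      · exact Finset.insert_subset_iff.2 ⟨hmM, hSM⟩
      · intro j hj
        have hjm : j ≠ m := fun h => hj (h ▸ hmM)
        dsimp only
        rw [Function.update_of_ne hjm]
        exact hoff j hj
  rw [h1, h2, h3, sub_zero, add_zero] at hL
  exact hL

end FrLemmas

/-- Closed `0`-forms relative to `M` vanishing on the `M`-boundary vanish. -/
lemma Z0 (a : Fin n → ℤ) (w : ℕ) (M' : Finset (Fin n)) (hM' : M'.Nonempty)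
    (ρ : GCell n → G)
    (hclosed : ∀ c, CellIn a w c → c.2.card = 1 → MCell a M' c → dF ρ c = 0)
    (hbdry : ∀ c, MBdry a w M' c → ρ c = 0) :
    ∀ c, CellIn a w c → c.2.card = 0 → MCell a M' c → ρ c = 0 := by
  obtain ⟨m', hm'⟩ := hM'
  have walk : ∀ d : ℕ, ∀ x : Fin n → ℤ, CellIn a w (x, (∅ : Finset (Fin n))) →
      MCell a M' (x, (∅ : Finset (Fin n))) → x m' = a m' + d → ρ (x, ∅) = 0 := by
    intro d
    induction d with
    | zero =>
      intro x hin hMc hx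
      exact hbdry _ ⟨m', hm', Finset.notMem_empty m', Or.inl (by dsimp only; omega)⟩
    | succ d ihd =>
      intro x hin hMc hx
      have hxw : x m' ≤ a m' + w := by
        have h2 := (hin m').2
        dsimp only at h2
        rw [if_neg (Finset.notMem_empty m')] at h2
        omega
      have hzin : CellIn a w (Function.update x m' (a m' + d),
          insert m' (∅ : Finset (Fin n))) := by
        refine cellIn_insert hin (Finset.notMem_empty m') (by omega) (by push_cast at hx; omega)
      have hzMc : MCell a M' (Function.update x m' (a m' + d), insert m' ∅) := by
        constructor
        · simp [hm']
        · intro j hj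
          have hjm : j ≠ m' := fun h => hj (by rw [h]; exact hm')
          dsimp only
          rw [Function.update_of_ne hjm]
          exact hMc.2 j hj
      have hcl := hclosed (Function.update x m' (a m' + d), insert m' ∅) hzin
        (by simp) hzMc
      rw [dF_eq] at hcl
      rw [show (insert m' (∅ : Finset (Fin n))) = {m'} from rfl] at hcl
      rw [Finset.sum_singleton] at hcl
      have hsg : sg ({m'} : Finset (Fin n)) m' = 1 := by
        unfold sg
        rw [Finset.filter_singleton, if_neg (lt_irrefl m')]
        simp
      rw [hsg, one_smul, Finset.erase_singleton] at hcl
      have hzx : Function.update x m' (a m' + d) + unitV n m' = x := by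
        have hval : a m' + (d : ℤ) + 1 = x m' := by push_cast at hx; omega
        rw [upd_unit_succ, hval]
        exact Function.update_eq_self m' x
      rw [hzx] at hcl
      have hz0 : ρ (Function.update x m' (a m' + d), ∅) = 0 := by
        refine ihd _ (cellIn_update hin (Finset.notMem_empty m') (by omega)
            (by push_cast at hx; omega)) ?_ (Function.update_self m' _ x)
        constructor
        · exact Finset.empty_subset _
        · intro j hj
          have hjm : j ≠ m' := fun h => hj (by rw [h]; exact hm')
          dsimp only
          rw [Function.update_of_ne hjm]
          exact hMc.2 j hj
      rw [hz0, sub_zero] at hcl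
      -- hcl : ρ (x, ∅) - 0 = 0  (after rewriting)
      simpa using hcl
  rintro ⟨x, S⟩ hin hcard hMc
  have hS : S = ∅ := Finset.card_eq_zero.1 hcard
  subst hS
  have h1 := (hin m').1
  dsimp only at h1
  exact walk (x m' - a m').toNat x hin hMc (by omega)

end DPL
namespace DPL

open Finset

variable {n : ℕ} {G : Type*} [AddCommGroup G]

lemma rawQstep (a : Fin n → ℤ) (w : ℕ) (hw : 0 < w) (K : ℕ)
    {M : Finset (Fin n)} {m : Fin n} (hmM : m ∈ M)
    (φ u : GCell n → G)
    (hclosed : ∀ c, CellIn a w c → c.2.card = K + 2 → MCell a M c → dF φ c = 0)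
    (hbdry : ∀ c, MBdry a w M c → φ c = 0)
    (hu : ∀ c, CellIn a w c → c.2.card = K → MCell a (M.erase m) c →
      dF u c = Fr a w m φ c)
    (hu_bdry : ∀ c, MBdry a w (M.erase m) c → u c = 0) :
    ∃ ψ : GCell n → G,
      (∀ c, ¬(CellIn a w c ∧ c.2.card = K ∧ MCell a M c) → ψ c = 0) ∧
      (∀ c, MBdry a w M c → ψ c = 0) ∧
      (∀ c, CellIn a w c → c.2.card = K + 1 → MCell a M c → dF ψ c = φ c) := by
  classical
  set θ : ℤ → ℤ := fun t => if t = a m + w then 1 else 0 with hθ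
  set ψpre : GCell n → G := fun c => Kr a m φ c - dF (Er θ a m u) c with hψpre
  refine ⟨fun c => if CellIn a w c ∧ c.2.card = K ∧ MCell a M c then ψpre c else 0,
    fun c hc => if_neg hc, ?_, ?_⟩
  · -- boundary vanishing
    rintro ⟨x, S⟩ hbd
    by_cases hgate : CellIn a w (x, S) ∧ ((x, S) : GCell n).2.card = K ∧ MCell a M (x, S)
    case neg => exact if_neg hgate
    simp only [if_pos hgate]
    obtain ⟨hin, hcard, hMc⟩ := hgate
    dsimp only at hcard
    obtain ⟨j, hjM, hjS, hex⟩ := hbd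
    dsimp only at hjS hex
    rw [hψpre]
    dsimp only
    rw [dF_Er θ a m u x S]
    by_cases hmS : m ∈ S
    · rw [dif_pos hmS]
      have hjm : j ≠ m := fun h => hjS (h ▸ hmS)
      have hu0 : u (Function.update x m (a m), S.erase m) = 0 := by
        apply hu_bdry
        refine ⟨j, Finset.mem_erase.2 ⟨hjm, hjM⟩,
          fun h => hjS (Finset.mem_of_mem_erase h), ?_⟩
        dsimp only
        rw [Function.update_of_ne hjm]
        exact hex
      rw [hu0, smul_zero, sub_zero]
      exact if_pos hmS
    · rw [dif_neg hmS]
      have hcellb : CellIn a w (Function.update x m (a m), S) :=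
        cellIn_update hin hmS le_rfl (by omega)
      have hMb : MCell a (M.erase m) (Function.update x m (a m), S) := by
        refine ⟨Finset.subset_erase.2 ⟨hMc.1, hmS⟩, fun j' hj' => ?_⟩
        by_cases hj'm : j' = m
        · subst hj'm
          exact Function.update_self _ _ _
        · dsimp only
          rw [Function.update_of_ne hj'm]
          exact hMc.2 j' (fun hM => hj' (Finset.mem_erase.2 ⟨hj'm, hM⟩))
      have hdFu : dF u (Function.update x m (a m), S)
          = Fr a w m φ (Function.update x m (a m), S) := hu _ hcellb hcard hMb
      rw [hdFu]
      by_cases hjm : j = m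
      · rw [hjm] at hex
        rcases hex with hexl | hexr
        · have hK : Kr a m φ (x, S) = 0 := by
            simp only [Kr]
            rw [if_neg hmS, hexl, Finset.Ico_self, Finset.sum_empty, smul_zero]
          have hθ0 : θ (x m) = 0 := by
            rw [hθ]
            dsimp only
            rw [hexl, if_neg (by omega)]
          rw [hK, hθ0, zero_smul, sub_zero]
        · have hxu : Function.update x m (a m + w) = x := by
            funext j'
            by_cases hj'm : j' = m
            · subst hj'm
              rw [Function.update_self]
              exact hexr.symm
            · rw [Function.update_of_ne hj'm]
          have hK : Kr a m φ (x, S)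
              = Fr a w m φ (Function.update x m (a m), S) := by
            rw [Fr_eq_Kr a w m φ _ _ hmS (Function.update_self _ _ _),
              Function.update_idem, hxu]
          have hθ1 : θ (x m) = 1 := by
            rw [hθ]
            dsimp only
            rw [if_pos hexr]
          rw [hK, hθ1, one_smul, sub_self]
      · have hK : Kr a m φ (x, S) = 0 := by
          simp only [Kr]
          rw [if_neg hmS, Finset.sum_eq_zero, smul_zero]
          intro t ht
          apply hbdry
          refine ⟨j, hjM, ?_, ?_⟩
          · intro h
            rcases Finset.mem_insert.1 (by simpa using h) with h | h
            · exact hjm h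
            · exact hjS h
          · dsimp only
            rw [Function.update_of_ne hjm]
            exact hex
        have hFr0 : Fr a w m φ (Function.update x m (a m), S) = 0 := by
          apply FrB a w φ hbdry
          refine ⟨j, Finset.mem_erase.2 ⟨hjm, hjM⟩, hjS, ?_⟩
          dsimp only
          rw [Function.update_of_ne hjm]
          exact hex
        rw [hK, hFr0, smul_zero, sub_zero]
  · -- derivative property
    rintro ⟨x, S⟩ hin hcard hMc
    dsimp only at hcard
    have hgoal : dF (fun c => if CellIn a w c ∧ c.2.card = K ∧ MCell a M c
        then ψpre c else 0) (x, S) = dF ψpre (x, S) := by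
      rw [dF_eq, dF_eq]
      refine Finset.sum_congr rfl fun i hi => ?_
      have g1 : CellIn a w (x + unitV n i, S.erase i) ∧ (S.erase i).card = K ∧
          MCell a M (x + unitV n i, S.erase i) := by
        refine ⟨cellIn_shift_erase hin hi, by rw [Finset.card_erase_of_mem hi, hcard]; omega, ?_⟩
        refine ⟨(Finset.erase_subset i S).trans hMc.1, fun j hj => ?_⟩
        have hij : i ≠ j := fun h => hj (h ▸ hMc.1 hi)
        dsimp only
        rw [add_unit_apply_ne x j i hij]
        exact hMc.2 j hj
      have g2 : CellIn a w (x, S.erase i) ∧ (S.erase i).card = K ∧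
          MCell a M (x, S.erase i) := by
        refine ⟨cellIn_erase hin i, by rw [Finset.card_erase_of_mem hi, hcard]; omega, ?_⟩
        exact ⟨(Finset.erase_subset i S).trans hMc.1, hMc.2⟩
      congr 1
      congr 1
      · exact if_pos g1
      · exact if_pos g2
    rw [hgoal, hψpre, dF_sub (Kr a m φ) (fun c => dF (Er θ a m u) c) (x, S)]
    have hdd : dF (fun c => dF (Er θ a m u) c) (x, S) = 0 := dF_dF _ _
    rw [hdd, sub_zero]
    have hax : a m ≤ x m := by
      have h1 := (hin m).1
      dsimp only at h1
      exact h1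
    have hL := L1 a m φ x S hax
    have hPr : Pr a m φ (x, S) = 0 := by
      by_cases hmS : m ∈ S
      · exact if_pos hmS
      · simp only [Pr]
        rw [if_neg hmS]
        exact hbdry _ ⟨m, hmM, hmS, Or.inl (Function.update_self _ _ _)⟩
    have hKd : Kr a m (dF φ) (x, S) = 0 := by
      by_cases hmS : m ∈ S
      · exact if_pos hmS
      · simp only [Kr]
        rw [if_neg hmS, Finset.sum_eq_zero, smul_zero]
        intro t ht
        have htt := Finset.mem_Ico.1 ht
        have hxw : x m ≤ a m + w := by
          have h2 := (hin m).2
          dsimp only at h2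
          rw [if_neg hmS, add_zero] at h2
          exact h2
        apply hclosed
        · exact cellIn_insert hin hmS htt.1 (by omega)
        · dsimp only
          rw [Finset.card_insert_of_notMem hmS, hcard]
        · refine ⟨Finset.insert_subset_iff.2 ⟨hmM, hMc.1⟩, fun j hj => ?_⟩
          have hjm : j ≠ m := fun h => hj (h ▸ hmM)
          dsimp only
          rw [Function.update_of_ne hjm]
          exact hMc.2 j hj
    rw [hPr, hKd, add_zero, sub_zero] at hL
    exact hL

theorem rawQ (a : Fin n → ℤ) (w : ℕ) (hw : 0 < w) (K : ℕ) :
    ∀ (M : Finset (Fin n)) (φ : GCell n → G), K + 2 ≤ M.card →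
    (∀ c, ¬(CellIn a w c ∧ c.2.card = K + 1 ∧ MCell a M c) → φ c = 0) →
    (∀ c, CellIn a w c → c.2.card = K + 2 → MCell a M c → dF φ c = 0) →
    (∀ c, MBdry a w M c → φ c = 0) →
    ∃ ψ : GCell n → G,
      (∀ c, ¬(CellIn a w c ∧ c.2.card = K ∧ MCell a M c) → ψ c = 0) ∧
      (∀ c, MBdry a w M c → ψ c = 0) ∧
      (∀ c, CellIn a w c → c.2.card = K + 1 → MCell a M c → dF ψ c = φ c) := by
  induction K with
  | zero =>
    intro M φ hMcard hsupp hclosed hbdry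
    obtain ⟨m, hmM⟩ := Finset.card_pos.1 (show 0 < M.card by omega)
    have hM' : (M.erase m).Nonempty := by
      apply Finset.card_pos.1
      rw [Finset.card_erase_of_mem hmM]
      omega
    have hu : ∀ c, CellIn a w c → c.2.card = 0 → MCell a (M.erase m) c →
        dF (0 : GCell n → G) c = Fr a w m φ c := by
      intro c hin hcard hMc
      rw [Z0 a w (M.erase m) hM' (Fr a w m φ)
        (FrC a w 0 φ hmM hclosed hbdry) (FrB a w φ hbdry) c hin hcard hMc]
      rw [dF_eq]
      apply Finset.sum_eq_zero
      intro i hi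
      simp
    exact rawQstep a w hw 0 hmM φ 0 hclosed hbdry hu (fun c _ => rfl)
  | succ K ihK =>
    intro M φ hMcard hsupp hclosed hbdry
    obtain ⟨m, hmM⟩ := Finset.card_pos.1 (show 0 < M.card by omega)
    have hMcard' : K + 2 ≤ (M.erase m).card := by
      rw [Finset.card_erase_of_mem hmM]
      omega
    obtain ⟨u, hu_supp, hu_bdry, hu⟩ := ihK (M.erase m) (Fr a w m φ) hMcard'
      (FrS a w (K + 1) φ hsupp) (FrC a w (K + 1) φ hmM hclosed hbdry)
      (FrB a w φ hbdry)
    exact rawQstep a w hw (K + 1) hmM φ u hclosed hbdry hu hu_bdry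

theorem rawR (a : Fin n → ℤ) (w k : ℕ) :
    ∀ (M : Finset (Fin n)) (φ : GCell n → G),
    (∀ c, ¬(CellIn a w c ∧ c.2.card = k + 1 ∧ MCell a M c) → φ c = 0) →
    (∀ c, CellIn a w c → c.2.card = k + 2 → MCell a M c → dF φ c = 0) →
    ∃ ψ : GCell n → G, ∀ c, CellIn a w c → c.2.card = k + 1 → MCell a M c →
      dF ψ c = φ c := by
  intro M
  induction M using Finset.strongInduction with
  | _ M ih =>
  intro φ hsupp hclosed
  rcases M.eq_empty_or_nonempty with rfl | ⟨m, hmM⟩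
  · refine ⟨0, fun c _ hcard hMc => absurd hcard ?_⟩
    have hS : c.2 = ∅ := Finset.subset_empty.1 hMc.1
    rw [hS]
    simp
  · set φ₂ : GCell n → G := fun c => if c.1 m = a m ∧ m ∉ c.2 then φ c else 0 with hφ₂
    have hsupp₂ : ∀ c, ¬(CellIn a w c ∧ c.2.card = k + 1 ∧ MCell a (M.erase m) c) →
        φ₂ c = 0 := by
      intro c hc
      rw [hφ₂]
      dsimp only
      by_cases hg : c.1 m = a m ∧ m ∉ c.2
      · rw [if_pos hg]
        apply hsupp
        rintro ⟨h1, h2, h3⟩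
        refine hc ⟨h1, h2, Finset.subset_erase.2 ⟨h3.1, hg.2⟩, fun j hj => ?_⟩
        by_cases hjm : j = m
        · subst hjm
          exact hg.1
        · exact h3.2 j (fun hM => hj (Finset.mem_erase.2 ⟨hjm, hM⟩))
      · rw [if_neg hg]
    have hclosed₂ : ∀ c, CellIn a w c → c.2.card = k + 2 → MCell a (M.erase m) c →
        dF φ₂ c = 0 := by
      rintro ⟨x, S⟩ hin hcard hMc
      have hxm : x m = a m := hMc.2 m (Finset.notMem_erase m M)
      have hmS : m ∉ S := fun h => (Finset.notMem_erase m M) (hMc.1 h)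
      have e : dF φ₂ (x, S) = dF φ (x, S) := by
        rw [dF_eq, dF_eq]
        refine Finset.sum_congr rfl fun i hi => ?_
        have him : i ≠ m := fun h => hmS (h ▸ hi)
        have g1 : φ₂ (x + unitV n i, S.erase i) = φ (x + unitV n i, S.erase i) := by
          rw [hφ₂]
          dsimp only
          rw [if_pos ⟨by rw [add_unit_apply_ne x m i him]; exact hxm,
            fun h => hmS (Finset.mem_of_mem_erase h)⟩]
        have g2 : φ₂ (x, S.erase i) = φ (x, S.erase i) := by
          rw [hφ₂]
          dsimp only
          rw [if_pos ⟨hxm, fun h => hmS (Finset.mem_of_mem_erase h)⟩]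
        rw [g1, g2]
      rw [e]
      refine hclosed (x, S) hin hcard ⟨hMc.1.trans (Finset.erase_subset m M),
        fun j hj => hMc.2 j (fun hM => hj (Finset.mem_of_mem_erase hM))⟩
    obtain ⟨ψ₂, hψ₂⟩ := ih (M.erase m) (Finset.erase_ssubset hmM) φ₂ hsupp₂ hclosed₂
    refine ⟨fun c => Kr a m φ c + Er (fun _ => 1) a m ψ₂ c, ?_⟩
    rintro ⟨x, S⟩ hin hcard hMc
    dsimp only at hcard
    rw [dF_add (Kr a m φ) (fun c => Er (fun _ => 1) a m ψ₂ c) (x, S)]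
    have hax : a m ≤ x m := by
      have h1 := (hin m).1
      dsimp only at h1
      exact h1
    have hL := L1 a m φ x S hax
    have hKd : Kr a m (dF φ) (x, S) = 0 := by
      by_cases hmS : m ∈ S
      · exact if_pos hmS
      · simp only [Kr]
        rw [if_neg hmS, Finset.sum_eq_zero, smul_zero]
        intro t ht
        have htt := Finset.mem_Ico.1 ht
        have hxw : x m ≤ a m + w := by
          have h2 := (hin m).2
          dsimp only at h2
          rw [if_neg hmS, add_zero] at h2
          exact h2
        apply hclosed
        · exact cellIn_insert hin hmS htt.1 (by omega)
        · dsimp only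
          rw [Finset.card_insert_of_notMem hmS, hcard]
        · refine ⟨Finset.insert_subset_iff.2 ⟨hmM, hMc.1⟩, fun j hj => ?_⟩
          have hjm : j ≠ m := fun h => hj (h ▸ hmM)
          dsimp only
          rw [Function.update_of_ne hjm]
          exact hMc.2 j hj
    have hEr := dF_Er (fun _ => (1 : ℤ)) a m ψ₂ x S
    by_cases hmS : m ∈ S
    · rw [dif_pos hmS] at hEr
      have hPr : Pr a m φ (x, S) = 0 := if_pos hmS
      rw [hKd, add_zero, hPr, sub_zero] at hL
      rw [hEr, hL]
      simp
    · rw [dif_neg hmS] at hEr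
      have hcellb : CellIn a w (Function.update x m (a m), S) :=
        cellIn_update hin hmS le_rfl (by omega)
      have hMb : MCell a (M.erase m) (Function.update x m (a m), S) := by
        refine ⟨Finset.subset_erase.2 ⟨hMc.1, hmS⟩, fun j' hj' => ?_⟩
        by_cases hj'm : j' = m
        · subst hj'm
          exact Function.update_self _ _ _
        · dsimp only
          rw [Function.update_of_ne hj'm]
          exact hMc.2 j' (fun hM => hj' (Finset.mem_erase.2 ⟨hj'm, hM⟩))
      rw [hEr, one_smul, hψ₂ _ hcellb hcard hMb]
      have hφ₂val : φ₂ (Function.update x m (a m), S)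
          = φ (Function.update x m (a m), S) := by
        rw [hφ₂]
        dsimp only
        rw [if_pos ⟨Function.update_self _ _ _, hmS⟩]
      have hPr : Pr a m φ (x, S) = φ (Function.update x m (a m), S) := by
        simp only [Pr]
        rw [if_neg hmS]
      rw [hφ₂val]
      rw [hKd, add_zero] at hL
      rw [hL, hPr]
      abel

end DPL

namespace DPL

open Finset

variable {n : ℕ} {G : Type*} [AddCommGroup G]

lemma dB_sub' {a : Fin n → ℤ} {w k : ℕ} (f g : FormB a w k G) :
    dB (f - g) = dB f - dB g := funext (dB_sub f g)

lemma dB_add' {a : Fin n → ℤ} {w k : ℕ} (f g : FormB a w k G) :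
    dB (f + g) = dB f + dB g := funext (dB_add f g)

lemma hsupp_extZ (a : Fin n → ℤ) (w k : ℕ) (f : FormB a w k G) :
    ∀ c, ¬(CellIn a w c ∧ c.2.card = k ∧ MCell a Finset.univ c) →
      extZ a w k f c = 0 := by
  intro c hc
  apply extZ_eq_zero
  rintro ⟨h1, h2⟩
  exact hc ⟨h1, h2, Finset.subset_univ _, fun j hj => absurd (Finset.mem_univ j) hj⟩

lemma hclosed_extZ (a : Fin n → ℤ) (w k : ℕ) (f : FormB a w (k + 1) G)
    (hf : dB f = 0) :
    ∀ c, CellIn a w c → c.2.card = k + 2 → MCell a Finset.univ c →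
      dF (extZ a w (k + 1) f) c = 0 := by
  intro c h1 h2 _
  rw [← dB_eq_dF f ⟨c, h1, h2⟩, hf]
  rfl

lemma partI (a : Fin n → ℤ) (w : ℕ) (k' : ℕ) (f : FormB a w (k' + 1) G)
    (hf : dB f = 0) : ∃ g : FormB a w k' G, dB g = f := by
  obtain ⟨ψ, hψ⟩ := rawR a w k' Finset.univ (extZ a w (k' + 1) f)
    (hsupp_extZ a w (k' + 1) f) (hclosed_extZ a w k' f hf)
  refine ⟨fun c => ψ c.1, ?_⟩
  funext c
  rw [dB_restrict, hψ c.1 c.2.1 c.2.2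
    ⟨Finset.subset_univ _, fun j hj => absurd (Finset.mem_univ j) hj⟩,
    extZ_eq f c.1 c.2.1 c.2.2]

end DPL


/-- **Lemma 2.2 (Discrete Poincaré lemma).**
Take any `1 ≤ k ≤ n` (written `k = k' + 1`), an abelian group `G`, and a cube `B` in `ℤⁿ`.
Then:
(i) the exterior derivative `d` maps the `G`-valued `(k−1)`-forms on `B` surjectively onto
the closed `G`-valued `k`-forms on `B`;
(ii) if `G` is finite, every closed `G`-valued `k`-form on `B` has exactly `m` preimages
under `d`, where `m` is the number of closed `G`-valued `(k−1)`-forms on `B`;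
(iii) if moreover `k ≤ n − 1` and `f` is a closed `k`-form on `B` vanishing on the boundary
of `B`, then `f = dh` for some `(k−1)`-form `h` on `B` vanishing on the boundary of `B`. -/
theorem discrete_poincare_lemma (n : ℕ) (hn : 1 ≤ n) (G : Type*) [AddCommGroup G]
    (k' : ℕ) (hkn : k' + 1 ≤ n) (a : Fin n → ℤ) (w : ℕ) (hw : 0 < w) :
    (∀ f : FormB a w (k' + 1) G, dB f = 0 → ∃ g : FormB a w k' G, dB g = f) ∧
    (Finite G → ∀ f : FormB a w (k' + 1) G, dB f = 0 →
      Nat.card {g : FormB a w k' G // dB g = f} =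
        Nat.card {g : FormB a w k' G // dB g = 0}) ∧
    (k' + 1 ≤ n - 1 → ∀ f : FormB a w (k' + 1) G, dB f = 0 →
      (∀ c : {c : GCell n // CellIn a w c ∧ c.2.card = k' + 1},
        CellOnBdry a w c.1 → f c = 0) →
      ∃ h : FormB a w k' G,
        (∀ c : {c : GCell n // CellIn a w c ∧ c.2.card = k'},
          CellOnBdry a w c.1 → h c = 0) ∧ dB h = f) := by
  classical
  refine ⟨fun f hf => DPL.partI a w k' f hf, ?_, ?_⟩
  · -- part (ii)
    intro _ f hf
    obtain ⟨g₀, hg₀⟩ := DPL.partI a w k' f hf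
    refine Nat.card_congr ⟨fun p => ⟨p.1 - g₀, ?_⟩, fun p => ⟨p.1 + g₀, ?_⟩, ?_, ?_⟩
    · rw [DPL.dB_sub', p.2, hg₀, sub_self]
    · rw [DPL.dB_add', p.2, hg₀, zero_add]
    · intro p
      exact Subtype.ext (by simp)
    · intro p
      exact Subtype.ext (by simp)
  · -- part (iii)
    intro hk f hf hfb
    rcases Nat.lt_or_ge w 2 with hw1 | hw2
    · -- w = 1 : everything is on the boundary
      have hwe : w = 1 := by omega
      subst hwe
      refine ⟨0, fun c _ => rfl, ?_⟩
      rw [DPL.dB_zero]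
      funext c
      exact (hfb c (DPL.cellOnBdry_of_w1 hn c.2.1)).symm
    · -- w ≥ 2
      have hbdry : ∀ c, DPL.MBdry a w Finset.univ c → extZ a w (k' + 1) f c = 0 := by
        rintro ⟨x, S⟩ ⟨j, _, hjS, hex⟩
        by_cases h : CellIn a w (x, S) ∧ ((x, S) : GCell n).2.card = k' + 1
        · rw [DPL.extZ_eq f _ h.1 h.2]
          exact hfb ⟨(x, S), h.1, h.2⟩ (DPL.cellOnBdry_of_extreme h.1 hjS hex)
        · exact DPL.extZ_eq_zero f _ h
      have hMcard : k' + 2 ≤ (Finset.univ : Finset (Fin n)).card := by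
        rw [Finset.card_univ, Fintype.card_fin]
        omega
      obtain ⟨ψ, hψsupp, hψbdry, hψd⟩ := DPL.rawQ a w hw k' Finset.univ
        (extZ a w (k' + 1) f) hMcard (DPL.hsupp_extZ a w (k' + 1) f)
        (DPL.hclosed_extZ a w k' f hf) hbdry
      refine ⟨fun c => ψ c.1, ?_, ?_⟩
      · intro c hcb
        obtain ⟨j, hjS, hex⟩ := DPL.extreme_of_cellOnBdry hw2 hcb
        exact hψbdry c.1 ⟨j, Finset.mem_univ j, hjS, hex⟩
      · funext c
        rw [DPL.dB_restrict, hψd c.1 c.2.1 c.2.2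
          ⟨Finset.subset_univ _, fun j hj => absurd (Finset.mem_univ j) hj⟩,
          DPL.extZ_eq f c.1 c.2.1 c.2.2]
end

section
/- For any abelian group G, any n ≥ 1, any 0 ≤ k ≤ n, and any G-valued k-form f on ℤⁿ, the coderivative and the Hodge dual are related by δf = (−1)^{n(k+1)+1} · (*d*f); that is, for every x ∈ ℤⁿ, δf(x) = (−1)^{n(k+1)+1} · (*d*f)(y), where y is the center of the n-cell dx₁∧⋯∧dx_n and the outer Hodge star identifies cells of the dual of the dual lattice with cells of ℤⁿ. -/

lemma neg_one_pow_congr' {p q : ℕ} (h : p % 2 = q % 2) : (-1:ℤ)^p = (-1)^q := by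
  rw [← Nat.div_add_mod p 2, ← Nat.div_add_mod q 2, pow_add, pow_add, pow_mul, pow_mul]
  norm_num [h]

lemma hodge_exp_insert {n : ℕ} {S : Finset (Fin n)} {i : Fin n} (hi : i ∉ S) :
    (∑ s ∈ insert i S, (((insert i S)ᶜ : Finset (Fin n)).filter (fun j => j < s)).card)
      + (S.filter (fun s => i < s)).card
    = ((Sᶜ : Finset (Fin n)).filter (fun j => j < i)).card
      + ∑ s ∈ S, ((Sᶜ : Finset (Fin n)).filter (fun j => j < s)).card := by
  rw [Finset.sum_insert hi, Finset.compl_insert]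
  have h1 : ((Sᶜ.erase i).filter (fun j => j < i)) = (Sᶜ : Finset (Fin n)).filter (fun j => j < i) := by
    rw [Finset.filter_erase, Finset.erase_eq_of_notMem (by simp)]
  have key : ∀ s ∈ S, (((Sᶜ : Finset (Fin n)).erase i).filter (fun j => j < s)).card
      + (if i < s then 1 else 0) = ((Sᶜ : Finset (Fin n)).filter (fun j => j < s)).card := by
    intro s hs
    rw [Finset.filter_erase]
    by_cases h : i < s
    · rw [if_pos h]
      exact Finset.card_erase_add_one (Finset.mem_filter.mpr ⟨Finset.mem_compl.mpr hi, h⟩)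
    · rw [if_neg h, add_zero, Finset.erase_eq_of_notMem (by simp [h])]
  have hsum : (∑ s ∈ S, (((Sᶜ : Finset (Fin n)).erase i).filter (fun j => j < s)).card)
      + (S.filter (fun s => i < s)).card
      = ∑ s ∈ S, ((Sᶜ : Finset (Fin n)).filter (fun j => j < s)).card := by
    rw [Finset.card_filter, ← Finset.sum_add_distrib]
    exact Finset.sum_congr rfl key
  rw [h1]
  omega

lemma hpart' {n : ℕ} {S : Finset (Fin n)} {i : Fin n} (hi : i ∉ S) :
    (S.filter (fun s => i < s)).card + (S.filter (fun j => j < i)).card = S.card := by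
  rw [← Finset.card_filter_add_card_filter_not (fun s => i < s) (s := S)]
  congr 1
  refine congrArg Finset.card (Finset.filter_congr ?_)
  intro s hs
  have hne : s ≠ i := fun h => hi (h ▸ hs)
  constructor
  · intro h; exact not_lt.mpr (le_of_lt h)
  · intro h; exact lt_of_le_of_ne (not_lt.mp h) hne

lemma parity_main (n k k' K a b t HS HS' : ℕ)
    (e1 : HS' + t = b + HS) (e2 : t + a = k') (e3 : k' + K = n) (e4 : k' + 1 = k) :
    (a + 1) % 2 = (n*(k+1) + 1 + k'*K + HS + b + HS') % 2 := by
  have hu := Nat.mul_mod n (k+1) 2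
  have hv := Nat.mul_mod k' K 2
  have ha : (k+1) % 2 = k' % 2 := by omega
  have hb : n % 2 = (k' % 2 + K % 2) % 2 := by omega
  rw [ha, hb] at hu
  rcases Nat.mod_two_eq_zero_or_one k' with h1 | h1 <;>
    rcases Nat.mod_two_eq_zero_or_one K with h2 | h2 <;>
      rw [h1, h2] at hu hv <;> norm_num at hu hv <;> omega

/-- **Lemma 2.3 (Coderivative and Hodge dual).**
For any abelian group `G`, any `n ≥ 1`, any `0 ≤ k ≤ n` and any `G`-valued `k`-form `f` on
`ℤⁿ`, the coderivative and the Hodge dual are related by `δf = (−1)^{n(k+1)+1} · (*d*f)`: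
for every `(k−1)`-cell `c` (at the point `x`), `δf(x) = (−1)^{n(k+1)+1} (*d*f)(y)`, where
`y` is the center of the `n`-cell at `x` (so that, in our integer coordinates for `*ℤⁿ`,
the base points agree), and the outer Hodge star identifies cells of the dual of the dual
lattice with cells of `ℤⁿ`.  (For `k = 0` there are no `(k−1)`-cells and `δf = 0`,
so the statement is vacuously the trivial one.) -/
theorem coderivative_eq_hodge_d_hodge (n : ℕ) (hn : 1 ≤ n) (G : Type*) [AddCommGroup G]
    (k : ℕ) (hk : k ≤ n) (f : GCell n → G) (c : GCell n) (hc : c.2.card + 1 = k) :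
    codiff f c =
      ((-1 : ℤ) ^ (n * (k + 1) + 1)) • hodgeToPrimal (dFDual (hodgeToDual f)) c := by
  obtain ⟨x, S⟩ := c
  simp only at hc
  simp only [codiff, hodgeToPrimal, dFDual, hodgeToDual, Finset.smul_sum]
  refine Finset.sum_congr rfl ?_
  rintro ⟨i, hi⟩ -
  simp only [Finset.compl_erase, compl_compl]
  rw [← smul_sub, smul_smul, smul_smul, smul_smul]
  congr 1
  have hiS : i ∉ S := by simpa using hi
  simp only [hodgeSign, ← pow_add, ← pow_mul]
  apply neg_one_pow_congr'
  have e1 := hodge_exp_insert hiS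
  have e2 := hpart' hiS
  have e3 : S.card + (Sᶜ : Finset (Fin n)).card = n := by
    rw [Finset.card_add_card_compl, Fintype.card_fin]
  have key := parity_main n k S.card (Sᶜ : Finset (Fin n)).card
      ((S.filter (fun j => j < i)).card)
      (((Sᶜ : Finset (Fin n)).filter (fun j => j < i)).card)
      ((S.filter (fun s => i < s)).card)
      (∑ s ∈ S, ((Sᶜ : Finset (Fin n)).filter (fun j => j < s)).card)
      (∑ s ∈ insert i S, (((insert i S)ᶜ : Finset (Fin n)).filter (fun j => j < s)).card)
      e1 e2 e3 hc
  omega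
end

section
/- Let B be any cube in ℤⁿ and 0 ≤ k ≤ n. Then a k-cell c of ℤⁿ is outside B if and only if its Hodge dual *c is either outside the dual cube *B or on the boundary of *B. Moreover, if c is a k-cell outside B that contains a (k−1)-cell of B (a face of c all of whose vertices are in B), then *c belongs to the boundary of *B. -/
section Aux

variable {n : ℕ}

lemma cellOutside_iff_not_cellIn {a : Fin n → ℤ} {w : ℕ} {c : GCell n} :
    CellOutside a w c ↔ ¬ CellIn a w c := by
  rw [cellIn_iff]
  constructor
  · rintro ⟨v, hv, hnv⟩ hin; exact hnv (hin v hv)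
  · intro h
    by_contra hno
    simp only [CellOutside, not_exists, not_and, not_not] at hno
    exact h hno

lemma dCellIn_iff {a : Fin n → ℤ} {w : ℕ} {c : GCell n} :
    DCellIn a w c ↔ ∀ v, DCellVert c v → InDCube a w v := by
  constructor
  · rintro h v ⟨T, hT, rfl⟩ m
    obtain ⟨h1, h2⟩ := h m
    by_cases hm : m ∈ T
    · have hmS : m ∈ c.2 := hT hm
      simp only [hm, if_pos, hmS] at *
      omega
    · simp only [hm, if_neg, not_false_iff, sub_zero]
      refine ⟨?_, h2⟩
      split at h1 <;> omega
  · intro h m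
    have h0 := h c.1 ⟨∅, Finset.empty_subset _, by funext m; simp⟩
    refine ⟨?_, (h0 m).2⟩
    by_cases hm : m ∈ c.2
    · have := (h (fun m' => c.1 m' - (if m' ∈ ({m} : Finset (Fin n)) then 1 else 0))
        ⟨{m}, by simpa using hm, rfl⟩) m
      simpa [hm] using this.1
    · have := h0 m
      simpa [hm] using this.1

lemma dCellOutside_iff_not_dCellIn {a : Fin n → ℤ} {w : ℕ} {c : GCell n} :
    DCellOutside a w c ↔ ¬ DCellIn a w c := by
  rw [dCellIn_iff]
  constructor
  · rintro ⟨v, hv, hnv⟩ hin; exact hnv (hin v hv)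
  · intro h
    by_contra hno
    simp only [DCellOutside, not_exists, not_and, not_not] at hno
    exact h hno

lemma dBdry_of {a : Fin n → ℤ} {w : ℕ} {x : Fin n → ℤ} {S : Finset (Fin n)}
    (hin : DCellIn a w (x, Sᶜ)) (m : Fin n) (hmS : m ∈ S)
    (hb : x m = a m - 1 ∨ x m = a m + w) :
    DCellOnBdry a w (x, Sᶜ) := by
  refine ⟨hin, ?_⟩
  rintro v hv
  refine ⟨dCellIn_iff.1 hin v hv, m, ?_⟩
  obtain ⟨T, hT, rfl⟩ := hv
  have hmT : m ∉ T := fun hm => by simpa [hmS] using hT hm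
  simpa [hmT] using hb

lemma exists_bdry_coord {a : Fin n → ℤ} {w : ℕ} (hw : 0 < w) {x : Fin n → ℤ}
    {S : Finset (Fin n)} (h : DCellOnBdry a w (x, Sᶜ)) :
    ∃ m ∈ S, x m = a m - 1 ∨ x m = a m + w := by
  classical
  set T : Finset (Fin n) := Sᶜ.filter (fun m => x m = a m + w) with hTdef
  have hv : DCellVert (x, Sᶜ) (fun m => x m - (if m ∈ T then 1 else 0)) :=
    ⟨T, Finset.filter_subset _ _, rfl⟩
  obtain ⟨_, m, hm⟩ := h.2 _ hv
  have hd := h.1 m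
  by_cases hmS : m ∈ S
  · refine ⟨m, hmS, ?_⟩
    have hmT : m ∉ T := fun hc => by simpa [hmS] using Finset.filter_subset _ _ hc
    simpa [hmT] using hm
  · exfalso
    have hmSc : m ∈ Sᶜ := by simpa using hmS
    simp only [hmSc, if_pos] at hd
    by_cases hmw : x m = a m + w
    · have hmT : m ∈ T := Finset.mem_filter.2 ⟨hmSc, hmw⟩
      simp only [hmT, if_pos] at hm
      omega
    · have hmT : m ∉ T := fun hc => hmw (Finset.mem_filter.1 hc).2
      simp only [hmT, if_neg, not_false_iff, sub_zero] at hm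
      omega

end Aux

/-- **Lemma 2.4 (Cells outside a cube and their duals).**
Let `B` be any cube in `ℤⁿ` and `0 ≤ k ≤ n`.  A `k`-cell `c` of `ℤⁿ` is outside `B` if and
only if its Hodge dual `*c` is either outside the dual cube `*B` or on the boundary of
`*B`.  Moreover, if `c` is a `k`-cell outside `B` that contains a `(k−1)`-cell of `B`
(a face of `c` all of whose vertices are in `B`), then `*c` belongs to the boundary of
`*B`. -/
theorem cell_outside_iff_dual_outside_or_bdry (n : ℕ) (hn : 1 ≤ n) (k : ℕ) (hk : k ≤ n)
    (a : Fin n → ℤ) (w : ℕ) (hw : 0 < w) (c : GCell n) (hc : c.2.card = k) :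
    (CellOutside a w c ↔
      DCellOutside a w (dualCell c) ∨ DCellOnBdry a w (dualCell c)) ∧
    (CellOutside a w c →
      (∃ i ∈ c.2, CellIn a w (c.1, c.2.erase i) ∨
        CellIn a w (c.1 + unitV n i, c.2.erase i)) →
      DCellOnBdry a w (dualCell c)) := by
  classical
  obtain ⟨x, S⟩ := c
  simp only [dualCell] at *
  have hout_iff : CellOutside a w (x, S) ↔
      ∃ m, x m < a m ∨ a m + w < x m + (if m ∈ S then 1 else 0) := by
    rw [cellOutside_iff_not_cellIn]
    simp only [CellIn, not_forall, not_and_or, not_le]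
  constructor
  · rw [hout_iff]
    constructor
    · rintro ⟨m, hm⟩
      by_cases hdin : DCellIn a w (x, Sᶜ)
      · right
        have hd := hdin m
        by_cases hmS : m ∈ S
        · have hmSc : m ∉ Sᶜ := by simp [hmS]
          simp only [hmS, if_pos] at hm
          simp only [hmSc, if_neg, not_false_iff, sub_zero] at hd
          exact dBdry_of hdin m hmS (by omega)
        · exfalso
          have hmSc : m ∈ Sᶜ := by simpa using hmS
          simp only [hmS, if_neg, not_false_iff, add_zero] at hm
          simp only [hmSc, if_pos] at hd
          omega
      · left
        exact dCellOutside_iff_not_dCellIn.2 hdin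
    · rintro (hdo | hbd)
      · rw [dCellOutside_iff_not_dCellIn] at hdo
        by_contra hno
        push_neg at hno
        apply hdo
        intro m
        have h := hno m
        by_cases hmS : m ∈ S
        · have hmSc : m ∉ Sᶜ := by simp [hmS]
          simp only [hmS, if_pos] at h
          simp only [hmSc, if_neg, not_false_iff, sub_zero]
          omega
        · have hmSc : m ∈ Sᶜ := by simpa using hmS
          simp only [hmS, if_neg, not_false_iff, add_zero] at h
          simp only [hmSc, if_pos]
          omega
      · obtain ⟨m, hmS, hb⟩ := exists_bdry_coord hw hbd
        exact ⟨m, by simp only [hmS, if_pos]; omega⟩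
  · rintro hout ⟨i, hiS, hface⟩
    rw [hout_iff] at hout
    obtain ⟨m0, hm0⟩ := hout
    rcases hface with hface | hface
    · -- face (x, S.erase i) in B; conclude x i = a i + w
      have hxi : x i = a i + w := by
        have hfi := hface i
        simp only [Finset.mem_erase, ne_eq, not_true_eq_false, false_and, if_neg,
          not_false_iff, add_zero] at hfi
        have hfm0 := hface m0
        by_cases hm0i : m0 = i
        · subst hm0i
          simp only [hiS, if_pos] at hm0
          omega
        · exfalso
          by_cases hm0S : m0 ∈ S
          · have : m0 ∈ S.erase i := Finset.mem_erase.2 ⟨hm0i, hm0S⟩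
            simp only [this, if_pos] at hfm0
            simp only [hm0S, if_pos] at hm0
            omega
          · have : m0 ∉ S.erase i := fun hc => hm0S (Finset.mem_of_mem_erase hc)
            simp only [this, if_neg, not_false_iff, add_zero] at hfm0
            simp only [hm0S, if_neg, not_false_iff, add_zero] at hm0
            omega
      have hdin : DCellIn a w (x, Sᶜ) := by
        intro m
        have hfm := hface m
        by_cases hmS : m ∈ S
        · have hmSc : m ∉ Sᶜ := by simp [hmS]
          simp only [hmSc, if_neg, not_false_iff, sub_zero]
          by_cases hmi : m = i
          · subst hmi; omega
          · have : m ∈ S.erase i := Finset.mem_erase.2 ⟨hmi, hmS⟩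
            simp only [this, if_pos] at hfm
            omega
        · have hmSc : m ∈ Sᶜ := by simpa using hmS
          simp only [hmSc, if_pos]
          have : m ∉ S.erase i := fun hc => hmS (Finset.mem_of_mem_erase hc)
          simp only [this, if_neg, not_false_iff, add_zero] at hfm
          omega
      exact dBdry_of hdin i hiS (Or.inr hxi)
    · -- face (x + e_i, S.erase i) in B; conclude x i = a i - 1
      have hface' : ∀ m, a m ≤ x m + (if m = i then 1 else 0) ∧
          x m + (if m = i then 1 else 0) + (if m ∈ S.erase i then 1 else 0) ≤ a m + w := by
        intro m
        have := hface m
        simpa [unitV] using this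
      have hxi : x i = a i - 1 := by
        have hfi := hface' i
        simp only [if_pos rfl, Finset.mem_erase, ne_eq,
          not_true_eq_false, false_and, if_neg, not_false_iff, add_zero] at hfi
        have hfm0 := hface' m0
        by_cases hm0i : m0 = i
        · subst hm0i
          simp only [hiS, if_pos] at hm0
          omega
        · exfalso
          simp only [hm0i, if_neg, not_false_iff, add_zero] at hfm0
          by_cases hm0S : m0 ∈ S
          · have : m0 ∈ S.erase i := Finset.mem_erase.2 ⟨hm0i, hm0S⟩
            simp only [this, if_pos] at hfm0
            simp only [hm0S, if_pos] at hm0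
            omega
          · have : m0 ∉ S.erase i := fun hc => hm0S (Finset.mem_of_mem_erase hc)
            simp only [this, if_neg, not_false_iff, add_zero] at hfm0
            simp only [hm0S, if_neg, not_false_iff, add_zero] at hm0
            omega
      have hdin : DCellIn a w (x, Sᶜ) := by
        intro m
        have hfm := hface' m
        by_cases hmi : m = i
        · subst hmi
          have hmSc : m ∉ Sᶜ := by simp [hiS]
          simp only [hmSc, if_neg, not_false_iff, sub_zero]
          simp only [if_pos rfl, Finset.mem_erase, ne_eq, not_true_eq_false, false_and,
            if_neg, not_false_iff, add_zero] at hfm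
          omega
        · simp only [hmi, if_neg, not_false_iff, add_zero] at hfm
          by_cases hmS : m ∈ S
          · have hmSc : m ∉ Sᶜ := by simp [hmS]
            simp only [hmSc, if_neg, not_false_iff, sub_zero]
            have : m ∈ S.erase i := Finset.mem_erase.2 ⟨hmi, hmS⟩
            simp only [this, if_pos] at hfm
            omega
          · have hmSc : m ∈ Sᶜ := by simpa using hmS
            simp only [hmSc, if_pos]
            have : m ∉ S.erase i := fun hc => hmS (Finset.mem_of_mem_erase hc)
            simp only [this, if_neg, not_false_iff, add_zero] at hfm
            omega
      exact dBdry_of hdin i hiS (Or.inl hxi)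
end

section
/- Primal-dual correspondence: Take any 1 ≤ k ≤ n−1, an abelian group G, and a cube B in ℤⁿ. Then the exterior derivative d is a surjective map from the set of G-valued (n−k−1)-forms g on the dual cube *B satisfying dg = 0 on all (n−k)-cells on the boundary of *B, onto the set of Hodge duals *f of G-valued k-forms f on B satisfying δf = 0. Moreover, if G is finite and m is the number of closed G-valued (n−k−1)-forms on *B, then every such *f has exactly m preimages under d. -/
/-! ### Auxiliary lemmas -/

section Aux

variable {n : ℕ} {G : Type*} [AddCommGroup G]

theorem neg_one_pow_parity {a b : ℕ} (h : a % 2 = b % 2) : ((-1 : ℤ)) ^ a = (-1) ^ b := by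
  rw [neg_one_pow_eq_pow_mod_two (R := ℤ) (n := a), neg_one_pow_eq_pow_mod_two (R := ℤ) (n := b), h]

theorem telescopeIcc_nat (A : ℤ → G) (L : ℤ) (N : ℕ) :
    ∑ t ∈ Finset.Icc L (L + N), (A t - A (t-1)) = A (L + N) - A (L-1) := by
  induction N with
  | zero => simp
  | succ N ih =>
      have : Finset.Icc L (L + (N+1 : ℕ)) = insert (L + N + 1) (Finset.Icc L (L + N)) := by
        ext x; simp only [Finset.mem_Icc, Finset.mem_insert]; push_cast; omega
      rw [this, Finset.sum_insert (by simp), ih]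
      have h1 : L + ((N:ℤ)+1) = L + N + 1 := by ring
      push_cast
      rw [h1]
      have h2 : L + (N:ℤ) + 1 - 1 = L + N := by ring
      rw [h2]
      abel

theorem telescopeIcc (A : ℤ → G) (L U : ℤ) (hLU : L ≤ U) :
    ∑ t ∈ Finset.Icc L U, (A t - A (t-1)) = A U - A (L-1) := by
  have h : U = L + ((U - L).toNat : ℤ) := by omega
  rw [h]; exact telescopeIcc_nat A L _

theorem hodgeSign_insert {S : Finset (Fin n)} {i : Fin n} (hi : i ∉ S) :
    hodgeSign (insert i S) = (-1) ^ (S.card + i.val) * hodgeSign S := by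
  unfold hodgeSign
  rw [← pow_add]
  apply neg_one_pow_parity
  rw [Finset.sum_insert hi, Finset.compl_insert]
  have hic : i ∈ Sᶜ := Finset.mem_compl.mpr hi
  have key : ∀ p ∈ S, ((Sᶜ : Finset (Fin n)).filter (fun j => j < p)).card
      = ((Sᶜ.erase i).filter (fun j => j < p)).card + (if i < p then 1 else 0) := by
    intro p hp
    rw [Finset.filter_erase]
    by_cases hip : i < p
    · rw [if_pos hip, ← Finset.card_erase_add_one (s := Sᶜ.filter (fun j => j < p)) (a := i)
        (Finset.mem_filter.mpr ⟨hic, hip⟩)]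
    · rw [if_neg hip, Finset.erase_eq_of_notMem (by simp [hip]), add_zero]
  have h1 : ∑ p ∈ S, ((Sᶜ : Finset (Fin n)).filter (fun j => j < p)).card
      = (∑ p ∈ S, ((Sᶜ.erase i).filter (fun j => j < p)).card)
        + (S.filter (fun p => i < p)).card := by
    rw [Finset.sum_congr rfl key, Finset.sum_add_distrib]
    congr 1
    rw [Finset.card_filter]
  have h2 : (S.filter (fun p => i < p)).card + (S.filter (fun p => p < i)).card = S.card := by
    rw [← Finset.card_union_of_disjoint]
    · congr 1
      ext p
      simp only [Finset.mem_union, Finset.mem_filter]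
      constructor
      · rintro (⟨h, _⟩ | ⟨h, _⟩) <;> exact h
      · intro hp
        have : p ≠ i := fun h => hi (h ▸ hp)
        rcases lt_or_gt_of_ne this with h | h
        · right; exact ⟨hp, h⟩
        · left; exact ⟨hp, h⟩
    · rw [Finset.disjoint_left]
      intro p hp1 hp2
      simp only [Finset.mem_filter] at hp1 hp2
      exact absurd hp1.2 (not_lt.mpr hp2.2.le)
  have h3 : (S.filter (fun p => p < i)).card
      + ((Sᶜ : Finset (Fin n)).filter (fun j => j < i)).card = i.val := by
    have : (Finset.univ.filter (fun j => j < i)).card = i.val := by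
      have h5 : Finset.univ.filter (fun j => j < i) = Finset.Iio i := by
        ext x; simp
      rw [h5, Fin.card_Iio]
    rw [← this, ← Finset.card_union_of_disjoint, ← Finset.filter_union, Finset.union_compl]
    exact Finset.disjoint_filter_filter (disjoint_compl_right)
  have h4 : ((Sᶜ.erase i).filter (fun j => j < i)).card
      = ((Sᶜ : Finset (Fin n)).filter (fun j => j < i)).card := by
    rw [Finset.filter_erase, Finset.erase_eq_of_notMem (by simp)]
  omega

theorem hodgeSign_mul_self (S : Finset (Fin n)) : hodgeSign S * hodgeSign S = 1 := by
  unfold hodgeSign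
  rw [← pow_add]
  exact Even.neg_one_pow ⟨_, rfl⟩

theorem hodgeSign_smul_smul (S : Finset (Fin n)) (v : G) :
    hodgeSign S • hodgeSign S • v = v := by
  rw [smul_smul, hodgeSign_mul_self, one_smul]

/-- `dFDual` with the `attach` removed. -/
theorem dFDual_eq (f : GCell n → G) (c : GCell n) :
    dFDual f c = ∑ i ∈ c.2,
      ((-1 : ℤ) ^ (c.2.filter (fun j => j < i)).card) •
        (f (c.1, c.2.erase i) - f (c.1 - unitV n i, c.2.erase i)) := by
  unfold dFDual
  exact Finset.sum_attach c.2 (fun i =>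
    ((-1 : ℤ) ^ (c.2.filter (fun j => j < i)).card) •
      (f (c.1, c.2.erase i) - f (c.1 - unitV n i, c.2.erase i)))

theorem codiff_eq (f : GCell n → G) (c : GCell n) :
    codiff f c = ∑ i ∈ (c.2ᶜ : Finset (Fin n)),
      ((-1 : ℤ) ^ ((c.2.filter (fun j => j < i)).card + 1)) •
        (f (c.1, insert i c.2) - f (c.1 - unitV n i, insert i c.2)) := by
  unfold codiff
  exact Finset.sum_attach (c.2ᶜ) (fun i =>
    ((-1 : ℤ) ^ ((c.2.filter (fun j => j < i)).card + 1)) •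
      (f (c.1, insert i c.2) - f (c.1 - unitV n i, insert i c.2)))

end Aux
section DD

variable {n : ℕ} {G : Type*} [AddCommGroup G]

private def ddF (h : GCell n → G) (z : Fin n → ℤ) (T : Finset (Fin n)) (i l : Fin n) : G :=
  if i = l then 0 else
  (((-1 : ℤ) ^ (T.filter (fun j => j < i)).card)
    * ((-1 : ℤ) ^ ((T.erase i).filter (fun j => j < l)).card)) •
  ((h (z, (T.erase i).erase l) - h (z - unitV n l, (T.erase i).erase l))
    - (h (z - unitV n i, (T.erase i).erase l)
      - h (z - unitV n i - unitV n l, (T.erase i).erase l)))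

private theorem ddF_anti (h : GCell n → G) (z : Fin n → ℤ) (T : Finset (Fin n))
    (i l : Fin n) (hi : i ∈ T) (hl : l ∈ T) : ddF h z T i l + ddF h z T l i = 0 := by
  by_cases hil : i = l
  · subst hil; simp [ddF]
  · unfold ddF
    rw [if_neg hil, if_neg (Ne.symm hil)]
    have hbody : ((h (z, (T.erase l).erase i) - h (z - unitV n i, (T.erase l).erase i))
          - (h (z - unitV n l, (T.erase l).erase i)
            - h (z - unitV n l - unitV n i, (T.erase l).erase i)))
        = ((h (z, (T.erase i).erase l) - h (z - unitV n l, (T.erase i).erase l))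
          - (h (z - unitV n i, (T.erase i).erase l)
            - h (z - unitV n i - unitV n l, (T.erase i).erase l))) := by
      rw [Finset.erase_right_comm, sub_right_comm]
      abel
    rw [hbody, ← add_smul, ← pow_add, ← pow_add]
    have key : ∀ a b : Fin n, a ∈ T → b ∈ T → a < b →
        ((T.erase a).filter (fun j => j < b)).card + 1
          = (T.filter (fun j => j < b)).card
        ∧ ((T.erase b).filter (fun j => j < a)).card
          = (T.filter (fun j => j < a)).card := by
      intro a b ha hb hab
      constructor
      · rw [Finset.filter_erase]
        exact Finset.card_erase_add_one (Finset.mem_filter.mpr ⟨ha, hab⟩)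
      · rw [Finset.filter_erase, Finset.erase_eq_of_notMem (by
          simp only [Finset.mem_filter, not_and]
          exact fun _ => not_lt.mpr hab.le)]
    have hsum : ((-1 : ℤ) ^ ((T.filter (fun j => j < i)).card
          + ((T.erase i).filter (fun j => j < l)).card))
        + ((-1 : ℤ) ^ ((T.filter (fun j => j < l)).card
          + ((T.erase l).filter (fun j => j < i)).card)) = 0 := by
      rcases lt_or_gt_of_ne hil with hlt | hgt
      · obtain ⟨k1, k2⟩ := key i l hi hl hlt
        have h' : ((-1 : ℤ) ^ ((T.filter (fun j => j < i)).card
              + ((T.erase i).filter (fun j => j < l)).card))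
            = (-1 : ℤ) ^ (((T.filter (fun j => j < l)).card
              + ((T.erase l).filter (fun j => j < i)).card) + 1) :=
          neg_one_pow_parity (by omega)
        rw [h', pow_succ]; ring
      · obtain ⟨k1, k2⟩ := key l i hl hi hgt
        have h' : ((-1 : ℤ) ^ ((T.filter (fun j => j < l)).card
              + ((T.erase l).filter (fun j => j < i)).card))
            = (-1 : ℤ) ^ (((T.filter (fun j => j < i)).card
              + ((T.erase i).filter (fun j => j < l)).card) + 1) :=
          neg_one_pow_parity (by omega)
        rw [h', pow_succ]; ring
    rw [hsum, zero_smul]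

theorem dFDual_dFDual (h : GCell n → G) (c : GCell n) : dFDual (dFDual h) c = 0 := by
  obtain ⟨z, T⟩ := c
  rw [dFDual_eq]
  simp only
  have expand : ∀ i ∈ T,
      ((-1 : ℤ) ^ (T.filter (fun j => j < i)).card) •
        (dFDual h (z, T.erase i) - dFDual h (z - unitV n i, T.erase i))
      = ∑ l ∈ T, ddF h z T i l := by
    intro i hiT
    rw [dFDual_eq, dFDual_eq]
    simp only
    rw [← Finset.sum_sub_distrib, Finset.smul_sum]
    have e1 : ∀ l ∈ T.erase i,
        ((-1 : ℤ) ^ (T.filter (fun j => j < i)).card) •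
          (((-1 : ℤ) ^ ((T.erase i).filter (fun j => j < l)).card) •
              (h (z, (T.erase i).erase l) - h (z - unitV n l, (T.erase i).erase l))
            - ((-1 : ℤ) ^ ((T.erase i).filter (fun j => j < l)).card) •
              (h ((z - unitV n i, (T.erase i).erase l).1, (T.erase i).erase l)
                - h ((z - unitV n i) - unitV n l, (T.erase i).erase l)))
        = ddF h z T i l := by
      intro l hl
      unfold ddF
      rw [if_neg (Ne.symm (Finset.ne_of_mem_erase hl))]
      rw [← smul_sub, smul_smul]
    rw [Finset.sum_congr rfl e1]
    exact Finset.sum_erase _ (by simp [ddF])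
  rw [Finset.sum_congr rfl expand, ← Finset.sum_product']
  apply Finset.sum_involution (fun p _ => (p.2, p.1))
  · intro p hp
    simp only [Finset.mem_product] at hp
    exact ddF_anti h z T p.1 p.2 hp.1 hp.2
  · intro p hp hne hcontra
    apply hne
    have h12 : p.1 = p.2 := (congrArg Prod.fst hcontra).symm
    simp [ddF, h12]
  · intro p hp
    simp only [Finset.mem_product] at hp ⊢
    exact ⟨hp.2, hp.1⟩
  · intro p hp; rfl

end DD
section Ident

variable {n : ℕ} {G : Type*} [AddCommGroup G]

theorem card_filter_lt_compl (S : Finset (Fin n)) (i : Fin n) :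
    (S.filter (fun j => j < i)).card
      + ((Sᶜ : Finset (Fin n)).filter (fun j => j < i)).card = i.val := by
  have huniv : (Finset.univ.filter (fun j => j < i)).card = i.val := by
    have h5 : Finset.univ.filter (fun j => j < i) = Finset.Iio i := by
      ext x; simp
    rw [h5, Fin.card_Iio]
  rw [← huniv, ← Finset.card_union_of_disjoint, ← Finset.filter_union, Finset.union_compl]
  exact Finset.disjoint_filter_filter (disjoint_compl_right)

/-- Master sign identity, first form: `δ ∘ (dual-to-primal Hodge) = ± (primal-to-dual Hodge) ∘ d`. -/
theorem codiff_hodge (v : GCell n → G) (z : Fin n → ℤ) (S : Finset (Fin n)) :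
    codiff (fun c => hodgeSign c.2 • v (c.1, (c.2ᶜ : Finset (Fin n)))) (z, S)
      = ((-1 : ℤ) ^ (S.card + 1) * hodgeSign S) • dFDual v (z, (Sᶜ : Finset (Fin n))) := by
  rw [codiff_eq, dFDual_eq, Finset.smul_sum]
  simp only
  refine Finset.sum_congr rfl (fun i hi => ?_)
  have hiS : i ∉ S := Finset.mem_compl.mp hi
  rw [Finset.compl_insert, hodgeSign_insert hiS, smul_sub, smul_smul, smul_smul,
    ← smul_sub, smul_smul]
  congr 1
  have hMN := card_filter_lt_compl S i
  have : ((-1 : ℤ) ^ ((S.filter (fun j => j < i)).card + 1))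
        * ((-1) ^ (S.card + i.val))
      = (-1 : ℤ) ^ (S.card + 1)
        * (-1) ^ ((Sᶜ : Finset (Fin n)).filter (fun j => j < i)).card := by
    rw [← pow_add, ← pow_add]
    exact neg_one_pow_parity (by omega)
  calc ((-1 : ℤ) ^ ((S.filter (fun j => j < i)).card + 1))
        * ((-1) ^ (S.card + i.val) * hodgeSign S)
      = (((-1 : ℤ) ^ ((S.filter (fun j => j < i)).card + 1))
          * ((-1) ^ (S.card + i.val))) * hodgeSign S := by ring
    _ = ((-1 : ℤ) ^ (S.card + 1)
          * (-1) ^ ((Sᶜ : Finset (Fin n)).filter (fun j => j < i)).card) * hodgeSign S := by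
        rw [this]
    _ = (-1 : ℤ) ^ (S.card + 1) * hodgeSign S
          * (-1) ^ ((Sᶜ : Finset (Fin n)).filter (fun j => j < i)).card := by ring

/-- Master sign identity, second form: `d ∘ (primal-to-dual Hodge) = ± (Hodge) ∘ δ`. -/
theorem dFDual_hodge (u : GCell n → G) (z : Fin n → ℤ) (T : Finset (Fin n)) :
    dFDual (fun c => hodgeSign (c.2ᶜ : Finset (Fin n)) • u (c.1, (c.2ᶜ : Finset (Fin n)))) (z, T)
      = ((-1 : ℤ) ^ ((Tᶜ : Finset (Fin n)).card + 1) * hodgeSign (Tᶜ : Finset (Fin n)))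
          • codiff u (z, (Tᶜ : Finset (Fin n))) := by
  rw [codiff_eq, dFDual_eq, Finset.smul_sum]
  simp only [compl_compl]
  refine Finset.sum_congr rfl (fun i hi => ?_)
  have hiS : i ∉ (Tᶜ : Finset (Fin n)) := by simp only [Finset.mem_compl, not_not]; exact hi
  rw [Finset.compl_erase, hodgeSign_insert hiS, smul_sub, smul_smul, smul_smul,
    ← smul_sub, smul_smul]
  congr 1
  have hMN := card_filter_lt_compl (Tᶜ : Finset (Fin n)) i
  rw [compl_compl] at hMN
  have key : ((-1 : ℤ) ^ (T.filter (fun j => j < i)).card)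
        * ((-1) ^ ((Tᶜ : Finset (Fin n)).card + i.val))
      = (-1 : ℤ) ^ ((Tᶜ : Finset (Fin n)).card + 1)
        * (-1) ^ (((Tᶜ : Finset (Fin n)).filter (fun j => j < i)).card + 1) := by
    rw [← pow_add, ← pow_add]
    exact neg_one_pow_parity (by omega)
  calc ((-1 : ℤ) ^ (T.filter (fun j => j < i)).card)
        * ((-1) ^ ((Tᶜ : Finset (Fin n)).card + i.val) * hodgeSign (Tᶜ : Finset (Fin n)))
      = (((-1 : ℤ) ^ (T.filter (fun j => j < i)).card)
          * ((-1) ^ ((Tᶜ : Finset (Fin n)).card + i.val))) * hodgeSign (Tᶜ : Finset (Fin n)) := by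
        ring
    _ = ((-1 : ℤ) ^ ((Tᶜ : Finset (Fin n)).card + 1)
          * (-1) ^ (((Tᶜ : Finset (Fin n)).filter (fun j => j < i)).card + 1))
            * hodgeSign (Tᶜ : Finset (Fin n)) := by rw [key]
    _ = (-1 : ℤ) ^ ((Tᶜ : Finset (Fin n)).card + 1) * hodgeSign (Tᶜ : Finset (Fin n))
          * (-1) ^ (((Tᶜ : Finset (Fin n)).filter (fun j => j < i)).card + 1) := by ring

end Ident
section Homotopy

variable {n : ℕ} {G : Type*} [AddCommGroup G]

/-- The homotopy operator: summation along the first coordinate direction. -/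
noncomputable def Kop (hn : 0 < n) (L : ℤ) (h : GCell n → G) : GCell n → G := fun c =>
  if (⟨0, hn⟩ : Fin n) ∈ c.2 then 0
  else ∑ t ∈ Finset.Icc L (c.1 ⟨0, hn⟩),
    h (Function.update c.1 ⟨0, hn⟩ t, insert (⟨0, hn⟩ : Fin n) c.2)

theorem update_sub_unitV (hn : 0 < n) (z : Fin n → ℤ) (i : Fin n) (hi : i ≠ ⟨0, hn⟩) (t : ℤ) :
    Function.update (z - unitV n i) (⟨0, hn⟩ : Fin n) t
      = Function.update z (⟨0, hn⟩ : Fin n) t - unitV n i := by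
  funext m
  by_cases hm : m = (⟨0, hn⟩ : Fin n)
  · subst hm
    simp [Function.update_self, unitV, Ne.symm hi]
  · simp [Function.update_of_ne hm, unitV]

theorem update_sub_unitV0 (hn : 0 < n) (z : Fin n → ℤ) (t : ℤ) :
    Function.update z (⟨0, hn⟩ : Fin n) t - unitV n ⟨0, hn⟩
      = Function.update z (⟨0, hn⟩ : Fin n) (t - 1) := by
  funext m
  by_cases hm : m = (⟨0, hn⟩ : Fin n)
  · subst hm; simp [unitV]
  · simp [Function.update_of_ne hm, unitV, hm]

theorem filter_lt_zero (hn : 0 < n) (T : Finset (Fin n)) :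
    T.filter (fun j => j < (⟨0, hn⟩ : Fin n)) = ∅ := by
  apply Finset.filter_false_of_mem
  intro j _
  simp [Fin.lt_def]

theorem not_lt_i0 (hn : 0 < n) {i : Fin n} (hi : i ≠ ⟨0, hn⟩) : (⟨0, hn⟩ : Fin n) < i := by
  have : i.val ≠ 0 := by simpa [Fin.ext_iff] using hi
  simpa [Fin.lt_def] using Nat.pos_of_ne_zero this

theorem homotopy_formula (hn : 0 < n) (L : ℤ) (p : ℕ) (h : GCell n → G)
    (hclosed : ∀ c : GCell n, c.2.card = p + 1 → dFDual h c = 0)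
    (hsupp : ∀ c : GCell n, c.2.card = p → c.1 ⟨0, hn⟩ < L → h c = 0)
    (c : GCell n) (hc : c.2.card = p) :
    dFDual (Kop hn L h) c = h c := by
  obtain ⟨z, T⟩ := c
  simp only at hc
  set i0 : Fin n := ⟨0, hn⟩ with hi0
  rw [dFDual_eq]
  simp only
  by_cases h0 : i0 ∈ T
  · -- the only surviving term is `i = i0`, and it telescopes to `h (z, T)`
    rw [Finset.sum_eq_single_of_mem i0 h0 (fun i hiT hine => by
      simp only [Kop, ← hi0, if_pos (Finset.mem_erase.mpr ⟨(Ne.symm hine), h0⟩)]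
      simp)]
    rw [filter_lt_zero hn T, Finset.card_empty, pow_zero, one_smul]
    have hi0e : i0 ∉ T.erase i0 := Finset.notMem_erase i0 T
    simp only [Kop, ← hi0, if_neg hi0e, Finset.insert_erase h0]
    have hcoord : (z - unitV n i0) i0 = z i0 - 1 := by simp [unitV]
    have hupd : ∀ t : ℤ, Function.update (z - unitV n i0) i0 t = Function.update z i0 t := by
      intro t; funext m
      by_cases hm : m = i0
      · subst hm; simp
      · simp [Function.update_of_ne hm, unitV, hm]
    rw [hcoord]
    have hsum : ∀ t : ℤ, h (Function.update (z - unitV n i0) i0 t, T)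
        = h (Function.update z i0 t, T) := fun t => by rw [hupd]
    simp only [hsum]
    by_cases hL : L ≤ z i0
    · have hsplit : Finset.Icc L (z i0) = insert (z i0) (Finset.Icc L (z i0 - 1)) := by
        ext x; simp only [Finset.mem_Icc, Finset.mem_insert]; omega
      rw [hsplit, Finset.sum_insert (by simp), Function.update_eq_self]
      abel
    · have he : Finset.Icc L (z i0) = ∅ := Finset.Icc_eq_empty (by omega)
      have he' : Finset.Icc L (z i0 - 1) = ∅ := Finset.Icc_eq_empty (by omega)
      rw [he, he', hsupp (z, T) hc (by exact (by omega : z i0 < L))]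
      simp
  · -- `i0 ∉ T`: rewrite as a double sum and use closedness + telescoping
    by_cases hL : L ≤ z i0
    · have expand : ∀ i ∈ T,
          ((-1 : ℤ) ^ (T.filter (fun j => j < i)).card) •
            (Kop hn L h (z, T.erase i) - Kop hn L h (z - unitV n i, T.erase i))
          = ∑ t ∈ Finset.Icc L (z i0),
              ((-1 : ℤ) ^ (T.filter (fun j => j < i)).card) •
                (h (Function.update z i0 t, insert i0 (T.erase i))
                  - h (Function.update z i0 t - unitV n i, insert i0 (T.erase i))) := by
        intro i hiT
        have hine : i ≠ i0 := fun he => h0 (he ▸ hiT)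
        have hni : i0 ∉ T.erase i := fun hmem => h0 (Finset.mem_of_mem_erase hmem)
        have hc2 : (z - unitV n i) i0 = z i0 := by simp [unitV, Ne.symm hine]
        simp only [Kop, ← hi0, if_neg hni, hc2]
        rw [← Finset.sum_sub_distrib, Finset.smul_sum]
        refine Finset.sum_congr rfl (fun t _ => ?_)
        rw [update_sub_unitV hn z i hine t]
      rw [Finset.sum_congr rfl expand, Finset.sum_comm]
      have inner : ∀ t ∈ Finset.Icc L (z i0),
          (∑ i ∈ T, ((-1 : ℤ) ^ (T.filter (fun j => j < i)).card) •
            (h (Function.update z i0 t, insert i0 (T.erase i))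
              - h (Function.update z i0 t - unitV n i, insert i0 (T.erase i))))
          = h (Function.update z i0 t, T) - h (Function.update z i0 (t - 1), T) := by
        intro t _
        have hcl := hclosed (Function.update z i0 t, insert i0 T)
          (by simp [Finset.card_insert_of_notMem h0, hc])
        rw [dFDual_eq] at hcl
        simp only at hcl
        rw [Finset.sum_insert h0] at hcl
        rw [filter_lt_zero hn (insert i0 T), Finset.card_empty, pow_zero, one_smul,
          Finset.erase_insert h0, update_sub_unitV0 hn z t] at hcl
        have hterm : ∀ i ∈ T,
            ((-1 : ℤ) ^ ((insert i0 T).filter (fun j => j < i)).card) •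
              (h (Function.update z i0 t, (insert i0 T).erase i)
                - h (Function.update z i0 t - unitV n i, (insert i0 T).erase i))
            = - (((-1 : ℤ) ^ (T.filter (fun j => j < i)).card) •
              (h (Function.update z i0 t, insert i0 (T.erase i))
                - h (Function.update z i0 t - unitV n i, insert i0 (T.erase i)))) := by
          intro i hiT
          have hine : i ≠ i0 := fun he => h0 (he ▸ hiT)
          have hfil : (insert i0 T).filter (fun j => j < i)
              = insert i0 (T.filter (fun j => j < i)) := by
            rw [Finset.filter_insert, if_pos (not_lt_i0 hn hine)]
          rw [hfil, Finset.card_insert_of_notMem (by simp [h0]), pow_succ,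
            Finset.erase_insert_of_ne (Ne.symm hine)]
          rw [mul_smul, neg_one_smul, smul_neg]
        rw [Finset.sum_congr rfl hterm, Finset.sum_neg_distrib, add_neg_eq_zero] at hcl
        exact hcl.symm
      rw [Finset.sum_congr rfl inner,
        telescopeIcc (fun t => h (Function.update z i0 t, T)) L (z i0) hL,
        Function.update_eq_self,
        hsupp (Function.update z i0 (L - 1), T) hc
          (by exact (by simp : Function.update z i0 (L - 1) i0 < L)), sub_zero]
    · -- base point below the support: everything vanishes
      have hzero : ∀ i ∈ T, ((-1 : ℤ) ^ (T.filter (fun j => j < i)).card) •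
          (Kop hn L h (z, T.erase i) - Kop hn L h (z - unitV n i, T.erase i)) = 0 := by
        intro i hiT
        have hine : i ≠ i0 := fun he => h0 (he ▸ hiT)
        have hni : i0 ∉ T.erase i := fun hmem => h0 (Finset.mem_of_mem_erase hmem)
        have hc2 : (z - unitV n i) i0 = z i0 := by simp [unitV, Ne.symm hine]
        have he : Finset.Icc L (z i0) = ∅ := Finset.Icc_eq_empty (by omega)
        simp only [Kop, ← hi0, if_neg hni, hc2, he, Finset.sum_empty]
        simp
      rw [Finset.sum_congr rfl hzero, Finset.sum_const_zero,
        hsupp (z, T) hc (by exact (by omega : z i0 < L))]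

end Homotopy
section Geom

variable {n : ℕ} {G : Type*} [AddCommGroup G]

theorem cellIn_dual {a : Fin n → ℤ} {w : ℕ} {z : Fin n → ℤ} {S : Finset (Fin n)}
    (h : CellIn a w (z, S)) : DCellIn a w (z, (Sᶜ : Finset (Fin n))) := by
  intro m
  have hm := h m
  simp only at hm ⊢
  by_cases hS : m ∈ S <;>
    simp only [Finset.mem_compl, hS, if_true, if_false, not_true, not_false_iff,
      ite_true, ite_false] at hm ⊢ <;> omega

theorem dCellVert_inDCube {a : Fin n → ℤ} {w : ℕ} {c : GCell n} (h : DCellIn a w c)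
    {v : Fin n → ℤ} (hv : DCellVert c v) : InDCube a w v := by
  obtain ⟨T', hsub, rfl⟩ := hv
  intro m
  have hm := h m
  by_cases h1 : m ∈ T'
  · have h2 : m ∈ c.2 := hsub h1
    simp only [h1, h2, if_true, ite_true] at *
    omega
  · simp only [h1, if_false, ite_false, not_false_iff, sub_zero]
    split_ifs at hm <;> omega

theorem cellIn_dual_iff_not_bdry {a : Fin n → ℤ} {w : ℕ} (hw : 0 < w)
    {z : Fin n → ℤ} {T : Finset (Fin n)} (hin : DCellIn a w (z, T)) :
    CellIn a w (z, (Tᶜ : Finset (Fin n))) ↔ ¬ DCellOnBdry a w (z, T) := by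
  constructor
  · intro hT hbd
    obtain ⟨-, hall⟩ := hbd
    classical
    set T' : Finset (Fin n) := T.filter (fun m => z m = a m + w) with hT'
    have hvert : DCellVert (z, T) (fun m => z m - if m ∈ T' then 1 else 0) :=
      ⟨T', Finset.filter_subset _ _, rfl⟩
    obtain ⟨-, m, hm⟩ := hall _ hvert
    have hc := hT m
    have hd := hin m
    have e1 : m ∈ T' ↔ (m ∈ T ∧ z m = a m + w) := by
      rw [hT', Finset.mem_filter]
    simp only at hm hc hd
    by_cases h2 : m ∈ T
    · by_cases h1 : m ∈ T'
      · have hz : z m = a m + w := (e1.mp h1).2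
        simp only [h1, if_true, ite_true] at hm
        simp only [Finset.mem_compl, h2, not_true, if_false, ite_false] at hc
        omega
      · have hz : z m ≠ a m + w := fun he => h1 (e1.mpr ⟨h2, he⟩)
        simp only [h1, if_false, ite_false, sub_zero] at hm
        simp only [Finset.mem_compl, h2, not_true, if_false, ite_false] at hc
        omega
    · have h1 : m ∉ T' := fun hmem => h2 (Finset.mem_filter.mp hmem).1
      simp only [h1, if_false, ite_false, sub_zero] at hm
      simp only [Finset.mem_compl, h2, not_false_iff, if_true, ite_true] at hc
      omega
  · intro hnb
    have hex : ∃ v, DCellVert (z, T) v ∧ ¬ DBdryVtx a w v := by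
      by_contra hcon
      push_neg at hcon
      exact hnb ⟨hin, fun v hv => hcon v hv⟩
    obtain ⟨v, hvert, hnbd⟩ := hex
    have hInD : InDCube a w v := dCellVert_inDCube hin hvert
    have hne : ∀ m, v m ≠ a m - 1 ∧ v m ≠ a m + w := by
      intro m
      constructor <;> intro he <;> exact hnbd ⟨hInD, m, by omega⟩
    obtain ⟨T', hsub, hveq⟩ := hvert
    intro m
    have hd := hin m
    have hI := hInD m
    have hn2 := hne m
    rw [hveq] at hI hn2
    simp only at hd hI hn2 ⊢
    by_cases h2 : m ∈ T
    · by_cases h1 : m ∈ T'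
      · simp only [h1, h2, if_true, ite_true, Finset.mem_compl, not_true, if_false,
          ite_false] at *
        omega
      · simp only [h1, h2, if_true, ite_true, if_false, ite_false, sub_zero,
          Finset.mem_compl, not_true] at *
        omega
    · have h1 : m ∉ T' := fun hmem => h2 (hsub hmem)
      simp only [h1, h2, if_false, ite_false, sub_zero, Finset.mem_compl,
        not_false_iff, if_true, ite_true] at *
      omega

end Geom
section Ext

variable {n : ℕ} {G : Type*} [AddCommGroup G]

open scoped Classical in
/-- Extension of a `j`-form on the dual cube `*B` to the whole dual lattice, by zero. -/
noncomputable def extDZ (a : Fin n → ℤ) (w : ℕ) (j : ℕ) (g : FormDB a w j G) :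
    GCell n → G := fun c =>
  if h : DCellIn a w c ∧ c.2.card = j then g ⟨c, h⟩ else 0

theorem dDB_eq_dFDual {a : Fin n → ℤ} {w : ℕ} {j : ℕ} (g : FormDB a w j G)
    (c : {c : GCell n // DCellIn a w c ∧ c.2.card = j + 1}) :
    dDB g c = dFDual (extDZ a w j g) c.1 := by
  unfold dDB dFDual
  refine Finset.sum_congr rfl (fun i _ => ?_)
  congr 1
  congr 1
  · unfold extDZ
    rw [dif_pos ⟨dCellIn_erase c.2.1 i.1, by simp [Finset.card_erase_of_mem i.2, c.2.2]⟩]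
  · unfold extDZ
    rw [dif_pos ⟨dCellIn_shift_erase c.2.1 i.2, by simp [Finset.card_erase_of_mem i.2, c.2.2]⟩]

theorem extZ_zero {a : Fin n → ℤ} {w k : ℕ} (f : FormB a w k G) (c : GCell n)
    (hc : ¬ CellIn a w c) : extZ a w k f c = 0 := by
  unfold extZ
  rw [dif_neg (fun hcon => hc hcon.1)]

/-- The coderivative of the zero-extension of a form on `B` vanishes at cells outside `B`. -/
theorem codiff_extZ_vanish {a : Fin n → ℤ} {w k : ℕ} (f : FormB a w k G)
    (z : Fin n → ℤ) (S : Finset (Fin n)) (hfar : ¬ CellIn a w (z, S)) :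
    codiff (extZ a w k f) (z, S) = 0 := by
  rw [codiff_eq]
  apply Finset.sum_eq_zero
  intro i hi
  have hiS : i ∉ S := Finset.mem_compl.mp hi
  have hm : ∃ m, ¬ (a m ≤ z m ∧ z m + (if m ∈ S then 1 else 0) ≤ a m + w) := by
    by_contra hcon
    push_neg at hcon
    exact hfar (fun m => hcon m)
  obtain ⟨m, hm⟩ := hm
  have h1 : ¬ CellIn a w (z, insert i S) := by
    intro hcon
    have hc := hcon m
    have hm' := hm
    simp only [Finset.mem_insert] at hc
    by_cases hmi : m = i
    · subst hmi
      simp only [hiS, eq_self_iff_true, if_true, if_false, ite_true, ite_false,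
        true_or, or_false] at hc hm'
      omega
    · by_cases hmS : m ∈ S <;>
        simp only [hmS, hmi, if_true, if_false, ite_true, ite_false, or_true, or_false,
          true_or, false_or] at hc hm' <;> omega
  have h2 : ¬ CellIn a w (z - unitV n i, insert i S) := by
    intro hcon
    have hc := hcon m
    have hm' := hm
    simp only [Finset.mem_insert, Pi.sub_apply, unitV] at hc
    by_cases hmi : m = i
    · subst hmi
      simp only [hiS, eq_self_iff_true, if_true, if_false, ite_true, ite_false,
        true_or, or_false] at hc hm'
      omega
    · by_cases hmS : m ∈ S <;>
        simp only [hmS, hmi, if_true, if_false, ite_true, ite_false, or_true, or_false,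
          true_or, false_or] at hc hm' <;> omega
  rw [extZ_zero f _ h1, extZ_zero f _ h2]
  simp

/-- If a cell is in `B`, the dual of any cell at the same base point is in `*B`. -/
theorem base_dual {a : Fin n → ℤ} {w : ℕ} {z : Fin n → ℤ} {S : Finset (Fin n)}
    (h : CellIn a w (z, S)) (U : Finset (Fin n)) : DCellIn a w (z, U) := by
  intro m
  have hm := h m
  simp only at hm ⊢
  split_ifs at hm ⊢ <;> omega

theorem shift_dual {a : Fin n → ℤ} {w : ℕ} {z : Fin n → ℤ} {S : Finset (Fin n)}
    (h : CellIn a w (z, S)) {i : Fin n} (U : Finset (Fin n)) (hiU : i ∉ U) :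
    DCellIn a w (z - unitV n i, U) := by
  intro m
  have hm := h m
  simp only [Pi.sub_apply, unitV] at hm ⊢
  by_cases hmi : m = i
  · subst hmi
    rw [if_neg hiU, if_pos rfl]
    split_ifs at hm <;> omega
  · rw [if_neg hmi]
    split_ifs at hm ⊢ <;> omega

theorem dDB_sub {a : Fin n → ℤ} {w j : ℕ} (g1 g2 : FormDB a w j G) :
    dDB (g1 - g2) = dDB g1 - dDB g2 := by
  funext c
  simp only [dDB, Pi.sub_apply]
  rw [← Finset.sum_sub_distrib]
  refine Finset.sum_congr rfl (fun i _ => ?_)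
  rw [← smul_sub]
  congr 1
  abel

theorem dDB_add {a : Fin n → ℤ} {w j : ℕ} (g1 g2 : FormDB a w j G) :
    dDB (g1 + g2) = dDB g1 + dDB g2 := by
  funext c
  simp only [dDB, Pi.add_apply]
  rw [← Finset.sum_add_distrib]
  refine Finset.sum_congr rfl (fun i _ => ?_)
  rw [← smul_add]
  congr 1
  abel

end Ext

/-- **Lemma 2.6 (Primal–dual correspondence).**
Take any `1 ≤ k ≤ n − 1` (with `j := n − k − 1`, i.e. `k + j + 1 = n`), an abelian group
`G`, and a cube `B` in `ℤⁿ`.  Then the exterior derivative `d` on the dual cube `*B` is a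
surjective map from the set of `G`-valued `(n−k−1)`-forms `g` on `*B` satisfying `dg = 0`
on the boundary of `*B`, onto the set of Hodge duals `*f` of `G`-valued `k`-forms `f` on
`B` satisfying `δf = 0`.  Moreover, if `G` is finite, every such `*f` has exactly `m`
preimages under `d`, where `m` is the number of closed `G`-valued `(n−k−1)`-forms on `*B`.
(`δf = 0` means: the coderivative of the extension of `f` by zero vanishes on the
`(k−1)`-cells of `B`.) -/
theorem primal_dual_correspondence (n : ℕ) (G : Type*) [AddCommGroup G]
    (k j : ℕ) (hk : 1 ≤ k) (hkj : k + j + 1 = n)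
    (a : Fin n → ℤ) (w : ℕ) (hw : 0 < w) :
    -- `d` maps into the set of duals of coclosed `k`-forms:
    (∀ g : FormDB a w j G,
      (∀ c : {c : GCell n // DCellIn a w c ∧ c.2.card = j + 1},
        DCellOnBdry a w c.1 → dDB g c = 0) →
      ∃ f : FormB a w k G,
        (∀ c : GCell n, CellIn a w c → c.2.card + 1 = k → codiff (extZ a w k f) c = 0) ∧
        dDB g = starB a w k f) ∧
    -- surjectivity:
    (∀ f : FormB a w k G,
      (∀ c : GCell n, CellIn a w c → c.2.card + 1 = k → codiff (extZ a w k f) c = 0) →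
      ∃ g : FormDB a w j G,
        (∀ c : {c : GCell n // DCellIn a w c ∧ c.2.card = j + 1},
          DCellOnBdry a w c.1 → dDB g c = 0) ∧
        dDB g = starB a w k f) ∧
    -- the correspondence is `m`-to-one when `G` is finite:
    (Finite G →
      ∀ f : FormB a w k G,
        (∀ c : GCell n, CellIn a w c → c.2.card + 1 = k → codiff (extZ a w k f) c = 0) →
        Nat.card {g : FormDB a w j G // dDB g = starB a w k f} =
          Nat.card {g : FormDB a w j G // dDB g = 0}) := by
  have hn : 0 < n := by omega
  have hcompl : ∀ S : Finset (Fin n), S.card = k → (Sᶜ : Finset (Fin n)).card = j + 1 := by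
    intro S hS
    rw [Finset.card_compl, Fintype.card_fin, hS]
    omega
  have hcompl' : ∀ T : Finset (Fin n), T.card = j + 1 → (Tᶜ : Finset (Fin n)).card = k := by
    intro T hT
    rw [Finset.card_compl, Fintype.card_fin, hT]
    omega
  have hcompl'' : ∀ T : Finset (Fin n), T.card = j + 1 + 1 →
      (Tᶜ : Finset (Fin n)).card + 1 = k := by
    intro T hT
    rw [Finset.card_compl, Fintype.card_fin, hT]
    omega
  -- ===== Part 2 (surjectivity), proved first since Part 3 uses it =====
  have part2 : ∀ f : FormB a w k G,
      (∀ c : GCell n, CellIn a w c → c.2.card + 1 = k → codiff (extZ a w k f) c = 0) →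
      ∃ g : FormDB a w j G,
        (∀ c : {c : GCell n // DCellIn a w c ∧ c.2.card = j + 1},
          DCellOnBdry a w c.1 → dDB g c = 0) ∧
        dDB g = starB a w k f := by
    intro f hf
    set Φ : GCell n → G := fun c =>
      hodgeSign ((c.2ᶜ : Finset (Fin n))) • extZ a w k f (c.1, (c.2ᶜ : Finset (Fin n)))
      with hΦ
    have hclosed : ∀ c : GCell n, c.2.card = (j + 1) + 1 → dFDual Φ c = 0 := by
      intro c hcard
      obtain ⟨z, T⟩ := c
      rw [hΦ, dFDual_hodge (extZ a w k f) z T]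
      by_cases hC : CellIn a w (z, (Tᶜ : Finset (Fin n)))
      · rw [hf (z, (Tᶜ : Finset (Fin n))) hC (hcompl'' T hcard), smul_zero]
      · rw [codiff_extZ_vanish f z Tᶜ hC, smul_zero]
    have hsupp : ∀ c : GCell n, c.2.card = j + 1 → c.1 ⟨0, hn⟩ < a ⟨0, hn⟩ → Φ c = 0 := by
      intro c hcard hlow
      rw [hΦ]
      simp only
      rw [extZ_zero f (c.1, (c.2ᶜ : Finset (Fin n)))
          (fun hcon => absurd (hcon ⟨0, hn⟩).1 (not_le.mpr hlow)), smul_zero]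
    set g : FormDB a w j G := fun c => Kop hn (a ⟨0, hn⟩) Φ c.1 with hg
    have hdg : ∀ c : {c : GCell n // DCellIn a w c ∧ c.2.card = j + 1},
        dDB g c = Φ c.1 := by
      intro c
      have hrfl : dDB g c = dFDual (Kop hn (a ⟨0, hn⟩) Φ) c.1 := rfl
      rw [hrfl]
      exact homotopy_formula hn _ (j + 1) Φ hclosed hsupp c.1 c.2.2
    have hstar : dDB g = starB a w k f := by
      funext c
      obtain ⟨⟨z, T⟩, hzT⟩ := c
      rw [hdg ⟨(z, T), hzT⟩]
      unfold starB
      by_cases hbd : DCellOnBdry a w (z, T)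
      · rw [if_pos hbd, hΦ]
        simp only
        rw [extZ_zero f _ (fun hC => ((cellIn_dual_iff_not_bdry hw hzT.1).mp hC) hbd),
          smul_zero]
      · rw [if_neg hbd, hΦ]
    refine ⟨g, fun c hbd => ?_, hstar⟩
    rw [hstar]
    unfold starB
    rw [if_pos hbd]
  -- ===== Part 1 =====
  have part1 : ∀ g : FormDB a w j G,
      (∀ c : {c : GCell n // DCellIn a w c ∧ c.2.card = j + 1},
        DCellOnBdry a w c.1 → dDB g c = 0) →
      ∃ f : FormB a w k G,
        (∀ c : GCell n, CellIn a w c → c.2.card + 1 = k → codiff (extZ a w k f) c = 0) ∧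
        dDB g = starB a w k f := by
    intro g hgbd
    set v : GCell n → G := dFDual (extDZ a w j g) with hv
    have hfdef : ∀ c : {c : GCell n // CellIn a w c ∧ c.2.card = k},
        DCellIn a w (c.1.1, (c.1.2ᶜ : Finset (Fin n)))
          ∧ ((c.1.2ᶜ : Finset (Fin n))).card = j + 1 :=
      fun c => ⟨cellIn_dual c.2.1, hcompl _ c.2.2⟩
    set f : FormB a w k G := fun c =>
      hodgeSign c.1.2 •
        dDB g ⟨(c.1.1, (c.1.2ᶜ : Finset (Fin n))), hfdef c⟩ with hfd
    have hC' : ∀ (y : Fin n → ℤ) (S : Finset (Fin n)) (hcard : S.card = k),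
        DCellIn a w (y, (Sᶜ : Finset (Fin n))) →
        extZ a w k f (y, S) = hodgeSign S • v (y, (Sᶜ : Finset (Fin n))) := by
      intro y S hcard hdual
      by_cases hC : CellIn a w (y, S)
      · unfold extZ
        rw [dif_pos (⟨hC, hcard⟩ : CellIn a w (y, S) ∧ (y, S).2.card = k), hfd]
        simp only
        congr 1
        rw [hv, ← dDB_eq_dFDual g ⟨(y, (Sᶜ : Finset (Fin n))), ⟨hdual, hcompl S hcard⟩⟩]
      · rw [extZ_zero f _ hC]
        have hbd : DCellOnBdry a w (y, (Sᶜ : Finset (Fin n))) := by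
          by_contra hnb
          apply hC
          have hcc := (cellIn_dual_iff_not_bdry hw hdual).mpr hnb
          rwa [compl_compl] at hcc
        have hz : v (y, (Sᶜ : Finset (Fin n))) = 0 := by
          rw [hv, ← dDB_eq_dFDual g ⟨(y, (Sᶜ : Finset (Fin n))), ⟨hdual, hcompl S hcard⟩⟩]
          exact hgbd _ hbd
        rw [hz, smul_zero]
    have hcod : ∀ c : GCell n, CellIn a w c → c.2.card + 1 = k →
        codiff (extZ a w k f) c = 0 := by
      intro c hcin hcard
      obtain ⟨z, S⟩ := c
      simp only at hcard
      have hstep : codiff (extZ a w k f) (z, S)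
          = codiff (fun c => hodgeSign c.2 • v (c.1, (c.2ᶜ : Finset (Fin n)))) (z, S) := by
        rw [codiff_eq, codiff_eq]
        refine Finset.sum_congr rfl (fun i hi => ?_)
        have hiS : i ∉ S := Finset.mem_compl.mp hi
        have hcardi : (insert i S).card = k := by
          rw [Finset.card_insert_of_notMem hiS]
          omega
        congr 1
        congr 1
        · exact hC' z (insert i S) hcardi (base_dual hcin _)
        · exact hC' (z - unitV n i) (insert i S) hcardi
            (shift_dual hcin _ (by simp))
      rw [hstep, codiff_hodge, hv, dFDual_dFDual, smul_zero]
    refine ⟨f, hcod, ?_⟩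
    funext c
    obtain ⟨⟨z, T⟩, hzT⟩ := c
    unfold starB
    by_cases hbd : DCellOnBdry a w (z, T)
    · rw [if_pos hbd]
      exact hgbd ⟨(z, T), hzT⟩ hbd
    · rw [if_neg hbd]
      have hcT : CellIn a w (z, (Tᶜ : Finset (Fin n))) :=
        (cellIn_dual_iff_not_bdry hw hzT.1).mpr hbd
      unfold extZ
      rw [dif_pos (⟨hcT, hcompl' T hzT.2⟩ :
        CellIn a w (z, (Tᶜ : Finset (Fin n)))
          ∧ ((z, (Tᶜ : Finset (Fin n))) : GCell n).2.card = k), hfd]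
      simp only
      rw [hodgeSign_smul_smul]
      exact congrArg (dDB g) (Subtype.ext (by simp))
  refine ⟨part1, part2, ?_⟩
  -- ===== Part 3 =====
  intro _ f hf
  obtain ⟨g₀, -, hg₀⟩ := part2 f hf
  apply Nat.card_congr
  exact
    { toFun := fun g => ⟨g.1 - g₀, by rw [dDB_sub, g.2, hg₀, sub_self]⟩
      invFun := fun g => ⟨g.1 + g₀, by rw [dDB_add, g.2, hg₀, zero_add]⟩
      left_inv := fun g => Subtype.ext (by simp)
      right_inv := fun g => Subtype.ext (by simp) }
end
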